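/- arXiv:0709.4018 — 6 statements merged into one kernel-verified Lean document; each statement's English description precedes it below -/
import Mathlib

section
/- Let X be a normal topological space and let {U_0', …, U_n'} be an open cover of X. Then there exists an infinite sequence of open sets (U_k)_{k=0}^∞ in X such that: (i) U_k = U_k' for k ≤ n; (ii) for every k > n, U_k is a disjoint union V_0 ∪ … ∪ V_n of open sets with V_i ⊆ U_i' for each 0 ≤ i ≤ n; and (iii) the family {U_k}_{k=0}^∞ is an (n+1)-cover of X, i.e., any n+1 distinct members of the family cover X. -/
open Set

section Aux
variable {X : Type*} [TopologicalSpace X]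

def GoodNext (n : ℕ) (U' : Fin (n + 1) → Set X) (W : ℕ → Set X) (k : ℕ) : Prop :=
  ∃ V : Fin (n + 1) → Set X,
    (∀ i, IsOpen (V i)) ∧ Pairwise (Function.onFun Disjoint V) ∧ (∀ i, V i ⊆ U' i) ∧
    ∀ T : Finset ℕ, (∀ j ∈ T, j < k) → T.card = n →
      (⋃ i, V i) ∪ (⋃ j ∈ T, W j) = univ

open scoped Classical in
noncomputable def nextSet (n : ℕ) (U' : Fin (n + 1) → Set X) (W : ℕ → Set X) (k : ℕ) : Set X :=
  if h : GoodNext n U' W k then ⋃ i, h.choose i else univ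

noncomputable def covSeq (n : ℕ) (U' : Fin (n + 1) → Set X) : ℕ → Set X
  | k =>
    if h : k ≤ n then U' ⟨k, Nat.lt_succ_of_le h⟩
    else nextSet n U' (fun j => if hj : j < k then covSeq n U' j else ∅) k
termination_by k => k
decreasing_by exact hj

lemma covSeq_le (n : ℕ) (U' : Fin (n + 1) → Set X) {k : ℕ} (hk : k ≤ n) :
    covSeq n U' k = U' ⟨k, Nat.lt_succ_of_le hk⟩ := by
  rw [covSeq]; simp [hk]

lemma covSeq_gt (n : ℕ) (U' : Fin (n + 1) → Set X) {k : ℕ} (hk : n < k) :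
    covSeq n U' k = nextSet n U' (fun j => if hj : j < k then covSeq n U' j else ∅) k := by
  rw [covSeq]; simp [Nat.not_le.mpr hk]

lemma covSeq_isOpen (n : ℕ) (U' : Fin (n + 1) → Set X) (hopen : ∀ i, IsOpen (U' i)) (k : ℕ) :
    IsOpen (covSeq n U' k) := by
  rcases le_or_gt k n with hk | hk
  · rw [covSeq_le n U' hk]; exact hopen _
  · rw [covSeq_gt n U' hk, nextSet]
    split
    · next h => exact isOpen_iUnion fun i => h.choose_spec.1 i
    · exact isOpen_univ
end Aux
lemma exists_disjoint_opens {X : Type*} [TopologicalSpace X] [NormalSpace X] {m : ℕ}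
    (C : Fin m → Set X) (hC : ∀ i, IsClosed (C i)) (hd : Pairwise (Function.onFun Disjoint C)) :
    ∃ V : Fin m → Set X, (∀ i, IsOpen (V i)) ∧ (∀ i, C i ⊆ V i) ∧ Pairwise (Function.onFun Disjoint V) := by
  have key : ∀ i j : Fin m, ∃ p : Set X × Set X, IsOpen p.1 ∧ IsOpen p.2 ∧ C i ⊆ p.1 ∧
      C j ⊆ p.2 ∧ (i ≠ j → Disjoint p.1 p.2) := by
    intro i j
    by_cases h : i = j
    · exact ⟨(univ, univ), isOpen_univ, isOpen_univ, subset_univ _, subset_univ _,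
        fun hne => absurd h hne⟩
    · obtain ⟨A, B, hA, hB, hCA, hCB, hAB⟩ := NormalSpace.normal (C i) (C j) (hC i) (hC j) (hd h)
      exact ⟨(A, B), hA, hB, hCA, hCB, fun _ => hAB⟩
  choose p h1 h2 h3 h4 h5 using key
  refine ⟨fun i => (⋂ j, (p i j).1) ∩ ⋂ j, (p j i).2, fun i => ?_, fun i => ?_, ?_⟩
  · exact (isOpen_iInter_of_finite fun j => h1 i j).inter
      (isOpen_iInter_of_finite fun j => h2 j i)
  · exact subset_inter (subset_iInter fun j => h3 i j) (subset_iInter fun j => h4 j i)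
  · intro i j hij
    have hVi : ((⋂ j', (p i j').1) ∩ ⋂ j', (p j' i).2) ⊆ (p i j).1 :=
      (inter_subset_left).trans (iInter_subset _ j)
    have hVj : ((⋂ j', (p j j').1) ∩ ⋂ j', (p j' j).2) ⊆ (p i j).2 :=
      (inter_subset_right).trans (iInter_subset _ i)
    exact ((h5 i j hij).mono hVi hVj)

lemma goodNext_of_inv {X : Type*} [TopologicalSpace X] [NormalSpace X] (n : ℕ) (U' : Fin (n + 1) → Set X)
    (hopen : ∀ i, IsOpen (U' i)) (W : ℕ → Set X) (k : ℕ) (hk : n < k)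
    (hWopen : ∀ j, j < k → IsOpen (W j))
    (heq : ∀ j : ℕ, ∀ h : j ≤ n, W j = U' ⟨j, Nat.lt_succ_of_le h⟩)
    (hinv : ∀ s : Finset ℕ, (∀ j ∈ s, j < k) → s.card = n + 1 → ⋃ j ∈ s, W j = univ) :
    GoodNext n U' W k := by
  classical
  set F : Finset ℕ → Set X := fun T => (⋃ j ∈ T, W j)ᶜ with hF
  have hphi : ∀ T : Finset ℕ, T.card = n → ∃ i : Fin (n + 1), (i : ℕ) ∉ T := by
    intro T hT
    by_contra h
    push_neg at h
    have hsub : Finset.range (n + 1) ⊆ T := by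
      intro j hj; rw [Finset.mem_range] at hj; exact h ⟨j, hj⟩
    have := Finset.card_le_card hsub
    simp [hT] at this
  set φ : Finset ℕ → Fin (n + 1) :=
    fun T => if h : ∃ i : Fin (n + 1), (i : ℕ) ∉ T then h.choose else 0 with hφdef
  have hφ : ∀ T : Finset ℕ, T.card = n → ((φ T : ℕ) ∉ T) := by
    intro T hT
    have h := hphi T hT
    simp only [hφdef, dif_pos h]
    exact h.choose_spec
  have hFsub : ∀ T : Finset ℕ, (∀ j ∈ T, j < k) → T.card = n → F T ⊆ W (φ T) := by
    intro T hTk hTc x hx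
    have hcard : (insert ((φ T : ℕ)) T).card = n + 1 := by
      rw [Finset.card_insert_of_notMem (hφ T hTc), hTc]
    have helts : ∀ j ∈ insert ((φ T : ℕ)) T, j < k := by
      intro j hj
      rcases Finset.mem_insert.mp hj with h | h
      · subst h; exact lt_of_le_of_lt (Nat.lt_succ_iff.mp (φ T).isLt) hk
      · exact hTk j h
    have hs := hinv _ helts hcard
    have hxmem : x ∈ ⋃ j ∈ insert ((φ T : ℕ)) T, W j := hs ▸ mem_univ x
    simp only [mem_iUnion, exists_prop] at hxmem
    obtain ⟨j, hj, hxj⟩ := hxmem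
    rcases Finset.mem_insert.mp hj with h | h
    · subst h; exact hxj
    · exact absurd (mem_iUnion₂.mpr ⟨j, h, hxj⟩) hx
  have hWφ : ∀ T : Finset ℕ, W ((φ T : ℕ)) = U' (φ T) := by
    intro T
    rw [heq _ (Nat.lt_succ_iff.mp (φ T).isLt), Fin.eta]
  have hFdisj : ∀ T T' : Finset ℕ, (∀ j ∈ T, j < k) → T.card = n →
      (∀ j ∈ T', j < k) → T'.card = n → T ≠ T' → F T ∩ F T' = ∅ := by
    intro T T' hTk hTc hT'k hT'c hne
    have hcard : n + 1 ≤ (T ∪ T').card := by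
      by_contra h
      push_neg at h
      have h1 : T = T ∪ T' := Finset.eq_of_subset_of_card_le Finset.subset_union_left
        (by omega)
      have h2 : T' = T ∪ T' := Finset.eq_of_subset_of_card_le Finset.subset_union_right
        (by omega)
      exact hne (h1.trans h2.symm)
    obtain ⟨s, hssub, hscard⟩ := Finset.exists_subset_card_eq hcard
    have hselts : ∀ j ∈ s, j < k := by
      intro j hj
      rcases Finset.mem_union.mp (hssub hj) with h | h
      · exact hTk j h
      · exact hT'k j h
    have hs := hinv s hselts hscard
    ext x
    simp only [mem_inter_iff, mem_empty_iff_false, iff_false, not_and]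
    intro hx1 hx2
    have hxmem : x ∈ ⋃ j ∈ s, W j := hs ▸ mem_univ x
    simp only [mem_iUnion, exists_prop] at hxmem
    obtain ⟨j, hj, hxj⟩ := hxmem
    rcases Finset.mem_union.mp (hssub hj) with h | h
    · exact hx1 (mem_iUnion₂.mpr ⟨j, h, hxj⟩)
    · exact hx2 (mem_iUnion₂.mpr ⟨j, h, hxj⟩)
  set 𝒯 : Finset (Finset ℕ) := (Finset.range k).powersetCard n with h𝒯
  have hmem𝒯 : ∀ T : Finset ℕ, T ∈ 𝒯 ↔ T ⊆ Finset.range k ∧ T.card = n := by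
    intro T; rw [h𝒯, Finset.mem_powersetCard]
  set G : Fin (n + 1) → Set X :=
    fun i => ⋃ T ∈ 𝒯.filter (fun T => φ T = i), F T with hG
  have hGclosed : ∀ i, IsClosed (G i) := by
    intro i
    apply Set.Finite.isClosed_biUnion (Finset.finite_toSet _)
    intro T hT
    simp only [Finset.coe_filter, mem_setOf_eq] at hT
    obtain ⟨hTsub, _⟩ := (hmem𝒯 T).mp hT.1
    exact (isOpen_biUnion fun j hj => hWopen j (Finset.mem_range.mp (hTsub hj))).isClosed_compl
  have hGsub : ∀ i, G i ⊆ U' i := by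
    intro i x hx
    simp only [hG, mem_iUnion, exists_prop, Finset.mem_filter] at hx
    obtain ⟨T, ⟨hT𝒯, hTφ⟩, hxT⟩ := hx
    obtain ⟨hTsub, hTc⟩ := (hmem𝒯 T).mp hT𝒯
    have := hFsub T (fun j hj => Finset.mem_range.mp (hTsub hj)) hTc hxT
    rw [hWφ T, hTφ] at this
    exact this
  have hGdisj : Pairwise (Function.onFun Disjoint G) := by
    intro i j hij
    rw [Function.onFun, Set.disjoint_iff_inter_eq_empty]
    ext x
    simp only [mem_inter_iff, mem_empty_iff_false, iff_false, not_and]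
    intro hxi hxj
    simp only [hG, mem_iUnion, exists_prop, Finset.mem_filter] at hxi hxj
    obtain ⟨T, ⟨hT𝒯, hTφ⟩, hxT⟩ := hxi
    obtain ⟨T', ⟨hT'𝒯, hT'φ⟩, hxT'⟩ := hxj
    obtain ⟨hTsub, hTc⟩ := (hmem𝒯 T).mp hT𝒯
    obtain ⟨hT'sub, hT'c⟩ := (hmem𝒯 T').mp hT'𝒯
    have hne : T ≠ T' := by
      intro h; subst h; exact hij (hTφ ▸ hT'φ ▸ rfl)
    have := hFdisj T T' (fun j hj => Finset.mem_range.mp (hTsub hj)) hTc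
      (fun j hj => Finset.mem_range.mp (hT'sub hj)) hT'c hne
    exact (this ▸ mem_inter hxT hxT' : x ∈ (∅ : Set X))
  obtain ⟨V', hV'open, hGV', hV'disj⟩ := exists_disjoint_opens G hGclosed hGdisj
  refine ⟨fun i => V' i ∩ U' i, fun i => (hV'open i).inter (hopen i), ?_, fun i => inter_subset_right, ?_⟩
  · intro i j hij
    exact (hV'disj hij).mono inter_subset_left inter_subset_left
  · intro T hTk hTc
    rw [eq_univ_iff_forall]
    intro x
    by_cases hx : x ∈ ⋃ j ∈ T, W j
    · exact Or.inr hx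
    · left
      have hxF : x ∈ F T := hx
      have hT𝒯 : T ∈ 𝒯 := (hmem𝒯 T).mpr ⟨fun j hj => Finset.mem_range.mpr (hTk j hj), hTc⟩
      have hxG : x ∈ G (φ T) := by
        simp only [hG, mem_iUnion, exists_prop, Finset.mem_filter]
        exact ⟨T, ⟨hT𝒯, rfl⟩, hxF⟩
      exact mem_iUnion.mpr ⟨φ T, mem_inter (hGV' _ hxG)
        ((hWφ T) ▸ hFsub T hTk hTc hxF)⟩

lemma covSeq_goodNext {X : Type*} [TopologicalSpace X] [NormalSpace X]
    (n : ℕ) (U' : Fin (n + 1) → Set X) (hopen : ∀ i, IsOpen (U' i)) {k : ℕ} (hk : n < k)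
    (hinv : ∀ s : Finset ℕ, (∀ j ∈ s, j < k) → s.card = n + 1 →
      ⋃ j ∈ s, covSeq n U' j = univ) :
    GoodNext n U' (fun j => if hj : j < k then covSeq n U' j else ∅) k := by
  apply goodNext_of_inv n U' hopen _ k hk
  · intro j hj; rw [dif_pos hj]; exact covSeq_isOpen n U' hopen j
  · intro j hj; rw [dif_pos (lt_of_le_of_lt hj hk), covSeq_le n U' hj]
  · intro s hs hc
    rw [show (⋃ j ∈ s, if hj : j < k then covSeq n U' j else ∅) = ⋃ j ∈ s, covSeq n U' j from
      iUnion₂_congr fun j hj => dif_pos (hs j hj)]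
    exact hinv s hs hc

lemma covSeq_eq_of_good {X : Type*} [TopologicalSpace X] (n : ℕ) (U' : Fin (n + 1) → Set X)
    {k : ℕ} (hk : n < k)
    (hgood : GoodNext n U' (fun j => if hj : j < k then covSeq n U' j else ∅) k) :
    covSeq n U' k = ⋃ i, hgood.choose i := by
  rw [covSeq_gt n U' hk]
  unfold nextSet
  rw [dif_pos hgood]

lemma covSeq_inv {X : Type*} [TopologicalSpace X] [NormalSpace X]
    (n : ℕ) (U' : Fin (n + 1) → Set X) (hopen : ∀ i, IsOpen (U' i))
    (hcover : ⋃ i, U' i = univ) :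
    ∀ m : ℕ, ∀ s : Finset ℕ, (∀ j ∈ s, j < m) → s.card = n + 1 →
      ⋃ j ∈ s, covSeq n U' j = univ := by
  intro m
  induction m with
  | zero =>
    intro s hs hc
    obtain ⟨j, hj⟩ := Finset.card_pos.mp (by omega : 0 < s.card)
    exact absurd (hs j hj) (Nat.not_lt_zero j)
  | succ m ih =>
    intro s hs hc
    by_cases hm : m ∈ s
    · rcases le_or_gt m n with hmn | hmn
      · have hsub : s ⊆ Finset.range (n + 1) := fun j hj =>
          Finset.mem_range.mpr (lt_of_lt_of_le (hs j hj) (by omega))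
        have hseq : s = Finset.range (n + 1) :=
          Finset.eq_of_subset_of_card_le hsub (by simp [hc])
        subst hseq
        rw [eq_univ_iff_forall]
        intro x
        obtain ⟨i, hxi⟩ := mem_iUnion.mp (hcover ▸ mem_univ x : x ∈ ⋃ i, U' i)
        refine mem_iUnion₂.mpr ⟨(i : ℕ), Finset.mem_range.mpr i.isLt, ?_⟩
        rw [covSeq_le n U' (Nat.lt_succ_iff.mp i.isLt), Fin.eta]
        exact hxi
      · have hgood := covSeq_goodNext n U' hopen hmn ih
        obtain ⟨hVo, hVd, hVs, hVcov⟩ := hgood.choose_spec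
        set T := s.erase m with hT
        have hTc : T.card = n := by rw [hT, Finset.card_erase_of_mem hm, hc]; omega
        have hTk : ∀ j ∈ T, j < m := by
          intro j hj
          have h1 := Finset.mem_of_mem_erase hj
          have h2 := Finset.ne_of_mem_erase hj
          have := hs j h1
          omega
        have hkey := hVcov T hTk hTc
        have hW : (⋃ j ∈ T, if hj : j < m then covSeq n U' j else ∅) =
            ⋃ j ∈ T, covSeq n U' j := iUnion₂_congr fun j hj => dif_pos (hTk j hj)
        rw [hW] at hkey
        have hins : s = insert m T := (Finset.insert_erase hm).symm
        rw [hins, Finset.set_biUnion_insert, covSeq_eq_of_good n U' hmn hgood]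
        exact hkey
    · exact ih s (fun j hj => by have := hs j hj; have : j ≠ m := fun h => hm (h ▸ hj); omega) hc

/-- Theorem 2.5 (first part): a finite open cover `U'₀, …, U'ₙ` of a normal space `X`
extends to an infinite open `(n+1)`-cover `(U_k)` of `X` with `U_k = U'_k` for `k ≤ n`,
where each `U_k` with `k > n` is a disjoint union `V₀ ∪ ⋯ ∪ Vₙ` of open sets with
`V_i ⊆ U'_i`. -/
theorem exists_infinite_nSuccCover_extension {X : Type*} [TopologicalSpace X] [NormalSpace X]
    (n : ℕ) (U' : Fin (n + 1) → Set X)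
    (hopen : ∀ i, IsOpen (U' i)) (hcover : ⋃ i, U' i = univ) :
    ∃ U : ℕ → Set X,
      (∀ k, IsOpen (U k)) ∧
      (∀ k : ℕ, ∀ hk : k ≤ n, U k = U' ⟨k, Nat.lt_succ_of_le hk⟩) ∧
      (∀ k : ℕ, n < k → ∃ V : Fin (n + 1) → Set X,
        (∀ i, IsOpen (V i)) ∧ Pairwise (Function.onFun Disjoint V) ∧
        (∀ i, V i ⊆ U' i) ∧ U k = ⋃ i, V i) ∧
      (∀ s : Finset ℕ, s.card = n + 1 → ⋃ k ∈ s, U k = univ) := by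
  refine ⟨covSeq n U', covSeq_isOpen n U' hopen, fun k hk => covSeq_le n U' hk, ?_, ?_⟩
  · intro k hk
    have hgood := covSeq_goodNext n U' hopen hk (covSeq_inv n U' hopen hcover k)
    obtain ⟨hVo, hVd, hVs, -⟩ := hgood.choose_spec
    exact ⟨hgood.choose, hVo, hVd, hVs, covSeq_eq_of_good n U' hk hgood⟩
  · intro s hc
    exact covSeq_inv n U' hopen hcover ((s.sup id) + 1) s
      (fun j hj => Nat.lt_succ_of_le (Finset.le_sup (f := id) hj)) hc
end

section
/- Let X be a path-connected normal topological space and let {U_0', …, U_n'} be an open cover of X by X-contractible sets. Then there exists an infinite open (n+1)-cover (U_k)_{k=0}^∞ of X (any n+1 distinct members cover X) with U_k = U_k' for k ≤ n, such that every U_k is X-contractible; moreover, for each k > n, U_k is a disjoint union of open sets V_0 ∪ … ∪ V_n with V_i ⊆ U_i'. -/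
open Set

/-- A subset `U` of a topological space `X` is `X`-contractible if the inclusion
`U ↪ X` is nullhomotopic (i.e. `U` can be contracted to a point within `X`). -/
def ContractibleIn {X : Type*} [TopologicalSpace X] (U : Set X) : Prop :=
  ContinuousMap.Nullhomotopic (⟨fun x => (x : X), continuous_subtype_val⟩ : C(U, X))


lemma ContractibleIn.mono {X : Type*} [TopologicalSpace X] {U V : Set X}
    (h : ContractibleIn U) (hVU : V ⊆ U) : ContractibleIn V := by
  have heq : (⟨fun x => (x : X), continuous_subtype_val⟩ : C(V, X)) =
      (⟨fun x => (x : X), continuous_subtype_val⟩ : C(U, X)).comp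
        ⟨Set.inclusion hVU, continuous_inclusion hVU⟩ := by
    ext x; rfl
  rw [ContractibleIn, heq]
  exact h.comp_left _

lemma ContractibleIn.homotopic_const {X : Type*} [TopologicalSpace X] [PathConnectedSpace X]
    {U : Set X} (h : ContractibleIn U) (p : X) :
    (⟨fun x => (x : X), continuous_subtype_val⟩ : C(U, X)).Homotopic
      (ContinuousMap.const U p) := by
  obtain ⟨q, hq⟩ := h
  rcases isEmpty_or_nonempty ↥U with hU | hU
  · have : (⟨fun x => (x : X), continuous_subtype_val⟩ : C(U, X)) = ContinuousMap.const U p := by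
      ext x; exact isEmptyElim x
    rw [this]
  · exact hq.trans (ContinuousMap.homotopic_const_iff.2 (PathConnectedSpace.joined q p))

lemma ContractibleIn.iUnion_of_disjoint {X : Type*} [TopologicalSpace X] [PathConnectedSpace X]
    {ι : Type*} {V : ι → Set X} (hV : ∀ i, IsOpen (V i)) (hd : Pairwise (Function.onFun Disjoint V))
    (hc : ∀ i, ContractibleIn (V i)) : ContractibleIn (⋃ i, V i) := by
  obtain ⟨p⟩ := (inferInstance : Nonempty X)
  have H : ∀ i, (⟨fun x => (x : X), continuous_subtype_val⟩ : C(V i, X)).Homotopy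
      (ContinuousMap.const (V i) p) := fun i => ((hc i).homotopic_const p).some
  set W := ⋃ i, V i with hW
  set S : ι → Set (unitInterval × ↥W) := fun i => {q | (q.2 : X) ∈ V i} with hS
  have hSopen : ∀ i, IsOpen (S i) :=
    fun i => (hV i).preimage (continuous_subtype_val.comp continuous_snd)
  set φ : ∀ i, C(S i, X) := fun i =>
    (H i).toContinuousMap.comp
      ⟨fun q => ((q : unitInterval × ↥W).1, ⟨((q : unitInterval × ↥W).2 : X), q.2⟩),
        ((continuous_fst.comp continuous_subtype_val).prodMk
          ((continuous_subtype_val.comp (continuous_snd.comp continuous_subtype_val)).subtype_mk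
            _))⟩ with hφdef
  have hφ : ∀ (i j) (x : unitInterval × ↥W) (hxi : x ∈ S i) (hxj : x ∈ S j),
      φ i ⟨x, hxi⟩ = φ j ⟨x, hxj⟩ := by
    intro i j x hxi hxj
    rcases eq_or_ne i j with rfl | hij
    · rfl
    · exact absurd (Set.disjoint_left.1 (hd hij) hxi) (not_not.2 hxj)
  have hScov : ∀ q : unitInterval × ↥W, ∃ i, S i ∈ nhds q := by
    intro q
    obtain ⟨i, hi⟩ := mem_iUnion.1 q.2.2
    exact ⟨i, (hSopen i).mem_nhds hi⟩
  set F := ContinuousMap.liftCover S φ hφ hScov with hF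
  refine ⟨p, ⟨⟨F, ?_, ?_⟩⟩⟩
  · intro x
    obtain ⟨i, hi⟩ := mem_iUnion.1 x.2
    have : ((0 : unitInterval), x) ∈ S i := hi
    have := ContinuousMap.liftCover_coe (S := S) (φ := φ) (hφ := hφ) (hS := hScov)
      (⟨((0 : unitInterval), x), this⟩ : S i)
    exact this.trans ((H i).map_zero_left _)
  · intro x
    obtain ⟨i, hi⟩ := mem_iUnion.1 x.2
    have hmem : ((1 : unitInterval), x) ∈ S i := hi
    have := ContinuousMap.liftCover_coe (S := S) (φ := φ) (hφ := hφ) (hS := hScov)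
      (⟨((1 : unitInterval), x), hmem⟩ : S i)
    exact this.trans ((H i).map_one_left _)

/-- Theorem 2.5 (contractible case): an open cover `U'₀, …, U'ₙ` of a path-connected
normal space `X` by `X`-contractible sets extends to an infinite open `(n+1)`-cover
`(U_k)` of `X` by `X`-contractible sets with `U_k = U'_k` for `k ≤ n`, where each `U_k`
with `k > n` is a disjoint union `V₀ ∪ ⋯ ∪ Vₙ` of open sets with `V_i ⊆ U'_i`. -/
theorem exists_infinite_contractible_nSuccCover_extension
    {X : Type*} [TopologicalSpace X] [NormalSpace X] [PathConnectedSpace X]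
    (n : ℕ) (U' : Fin (n + 1) → Set X)
    (hopen : ∀ i, IsOpen (U' i)) (hcover : ⋃ i, U' i = univ)
    (hcontr : ∀ i, ContractibleIn (U' i)) :
    ∃ U : ℕ → Set X,
      (∀ k, IsOpen (U k)) ∧
      (∀ k : ℕ, ∀ hk : k ≤ n, U k = U' ⟨k, Nat.lt_succ_of_le hk⟩) ∧
      (∀ k, ContractibleIn (U k)) ∧
      (∀ k : ℕ, n < k → ∃ V : Fin (n + 1) → Set X,
        (∀ i, IsOpen (V i)) ∧ Pairwise (Function.onFun Disjoint V) ∧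
        (∀ i, V i ⊆ U' i) ∧ U k = ⋃ i, V i) ∧
      (∀ s : Finset ℕ, s.card = n + 1 → ⋃ k ∈ s, U k = univ) := by
  classical
  obtain ⟨b, hb⟩ := BumpCovering.exists_isSubordinate_of_locallyFinite isClosed_univ U' hopen
    (locallyFinite_of_finite U') (by rw [hcover])
  set f := b.toPartitionOfUnity with hfdef
  have hf : f.IsSubordinate U' := hb.toPartitionOfUnity
  have hsum : ∀ x : X, ∑ i, f i x = 1 := fun x => by
    have := f.sum_eq_one (mem_univ x); rwa [finsum_eq_sum_of_fintype] at this
  have hnn : ∀ (i) (x : X), 0 ≤ f i x := fun i x => f.nonneg i x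
  have hsupp : ∀ (i) (x : X), f i x ≠ 0 → x ∈ U' i := fun i x h =>
    hf i (subset_closure (Function.mem_support.2 h))
  set t : ℕ → ℝ := fun k => 1 / (k + 2) with htdef
  have ht0 : ∀ k, 0 < t k := fun k => by positivity
  have htlt : ∀ k, n < k → t k < 1 / (n + 1) := by
    intro k hk
    apply one_div_lt_one_div_of_lt (by positivity)
    have : (n : ℝ) < k := by exact_mod_cast hk
    linarith
  have hmax : ∀ x : X, ∃ i, 1 / (n + 1 : ℝ) ≤ f i x := by
    intro x
    have hne : ((n : ℝ) + 1) ≠ 0 := by positivity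
    have hle : ∑ _i : Fin (n + 1), (1 / (n + 1 : ℝ)) ≤ ∑ i, f i x := by
      rw [hsum x, Finset.sum_const, Finset.card_univ, Fintype.card_fin, nsmul_eq_mul, mul_one_div]
      push_cast
      rw [div_self hne]
    obtain ⟨i, -, hi⟩ := Finset.exists_le_of_sum_le Finset.univ_nonempty hle
    exact ⟨i, hi⟩
  set U : ℕ → Set X := fun k => if h : k ≤ n then U' ⟨k, Nat.lt_succ_of_le h⟩
    else {x | ∀ i, f i x ≠ t k} with hUdef
  have hUle : ∀ k (h : k ≤ n), U k = U' ⟨k, Nat.lt_succ_of_le h⟩ := fun k h => dif_pos h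
  have hUgt : ∀ k, n < k → U k = {x | ∀ i, f i x ≠ t k} := fun k h => dif_neg (not_le.2 h)
  -- decomposition
  have hdecomp : ∀ k : ℕ, n < k → ∃ V : Fin (n + 1) → Set X,
      (∀ i, IsOpen (V i)) ∧ Pairwise (Function.onFun Disjoint V) ∧
      (∀ i, V i ⊆ U' i) ∧ U k = ⋃ i, V i := by
    intro k hk
    set V : Fin (n + 1) → Set X := fun i =>
      {x | (∀ j, f j x ≠ t k) ∧ t k < f i x ∧ ∀ j < i, f j x < t k} with hVdef
    refine ⟨V, ?_, ?_, ?_, ?_⟩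
    · intro i
      have hVeq : V i = (⋂ j, (f j) ⁻¹' ({t k}ᶜ)) ∩ ((f i) ⁻¹' Ioi (t k)) ∩
          ⋂ j ∈ Finset.Iio i, (f j) ⁻¹' Iio (t k) := by
        ext x
        simp only [hVdef, mem_setOf_eq, mem_inter_iff, mem_iInter, mem_preimage,
          mem_compl_iff, mem_singleton_iff, mem_Ioi, mem_Iio, Finset.mem_Iio, and_assoc]
      rw [hVeq]
      exact ((isOpen_iInter_of_finite fun j =>
          isOpen_compl_singleton.preimage (f j).continuous).inter
        (isOpen_Ioi.preimage (f i).continuous)).inter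
        (isOpen_biInter_finset fun j _ => isOpen_Iio.preimage (f j).continuous)
    · intro i j hij
      refine Set.disjoint_left.2 fun x hxi hxj => ?_
      rcases hij.lt_or_gt with h | h
      · exact absurd hxi.2.1 (not_lt.2 (hxj.2.2 i h).le)
      · exact absurd hxj.2.1 (not_lt.2 (hxi.2.2 j h).le)
    · intro i x hx
      exact hsupp i x ((ht0 k).trans hx.2.1).ne'
    · rw [hUgt k hk]
      ext x
      simp only [mem_iUnion, hVdef, mem_setOf_eq]
      constructor
      · intro hx
        have hex : ∃ i, t k < f i x := by
          by_contra hno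
          push_neg at hno
          have hlt : ∀ i, f i x < t k := fun i => lt_of_le_of_ne (hno i) (hx i)
          have hbad : (1 : ℝ) < 1 := by
            calc (1 : ℝ) = ∑ i, f i x := (hsum x).symm
              _ < ∑ _i : Fin (n + 1), t k :=
                  Finset.sum_lt_sum_of_nonempty Finset.univ_nonempty fun i _ => hlt i
              _ = ((n : ℝ) + 1) * t k := by
                  rw [Finset.sum_const, Finset.card_univ, Fintype.card_fin, nsmul_eq_mul]
                  push_cast; ring
              _ < ((n : ℝ) + 1) * (1 / (n + 1)) :=
                  mul_lt_mul_of_pos_left (htlt k hk) (by positivity)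
              _ = 1 := by field_simp
          exact absurd hbad (lt_irrefl 1)
        set T := Finset.univ.filter (fun i => t k < f i x) with hT
        have hTne : T.Nonempty := by
          obtain ⟨i, hi⟩ := hex
          exact ⟨i, Finset.mem_filter.2 ⟨Finset.mem_univ _, hi⟩⟩
        refine ⟨T.min' hTne, hx, (Finset.mem_filter.1 (T.min'_mem hTne)).2, ?_⟩
        intro j hj
        have hjT : j ∉ T := fun hjT => absurd (T.min'_le j hjT) (not_le.2 hj)
        have hnlt : ¬ t k < f j x := fun hc =>
          hjT (Finset.mem_filter.2 ⟨Finset.mem_univ _, hc⟩)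
        exact lt_of_le_of_ne (not_lt.1 hnlt) (hx j)
      · rintro ⟨i, h1, -, -⟩
        exact h1
  -- covering property
  have hcov : ∀ s : Finset ℕ, s.card = n + 1 → ⋃ k ∈ s, U k = univ := by
    intro s hs
    apply Set.eq_univ_of_forall
    intro x
    rw [mem_iUnion₂]
    by_contra hcon
    push_neg at hcon
    obtain ⟨i₀, hi₀⟩ := hmax x
    have hfi₀ : (0:ℝ) < f i₀ x := lt_of_lt_of_le (by positivity) hi₀
    have hxU' : x ∈ U' i₀ := hsupp i₀ x hfi₀.ne'
    set g : ℕ → Fin (n + 1) := fun k =>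
      if hk : k ≤ n then ⟨k, Nat.lt_succ_of_le hk⟩
      else if hk2 : ∃ i, f i x = t k then hk2.choose else i₀ with hg
    have hgle : ∀ k (h : k ≤ n), g k = ⟨k, Nat.lt_succ_of_le h⟩ := fun k h => dif_pos h
    have hgt : ∀ k ∈ s, ¬ k ≤ n → f (g k) x = t k := by
      intro k hks hkn
      have hxU : x ∉ U k := hcon k hks
      rw [hUgt k (not_le.1 hkn)] at hxU
      simp only [mem_setOf_eq, not_forall, not_not] at hxU
      rw [hg]
      simp only [dif_neg hkn, dif_pos hxU]
      exact hxU.choose_spec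
    have hnotin : ∀ k ∈ s, ∀ hkn : k ≤ n, x ∉ U' ⟨k, Nat.lt_succ_of_le hkn⟩ := by
      intro k hks hkn
      have := hcon k hks
      rwa [hUle k hkn] at this
    have hinj : Set.InjOn g s := by
      intro k1 h1 k2 h2 heq
      by_cases a1 : k1 ≤ n <;> by_cases a2 : k2 ≤ n
      · rw [hgle k1 a1, hgle k2 a2] at heq
        simpa using heq
      · exfalso
        have h2' := hgt k2 h2 a2
        have : x ∈ U' (g k2) := hsupp _ x (h2' ▸ (ht0 k2).ne')
        rw [← heq, hgle k1 a1] at this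
        exact hnotin k1 h1 a1 this
      · exfalso
        have h1' := hgt k1 h1 a1
        have : x ∈ U' (g k1) := hsupp _ x (h1' ▸ (ht0 k1).ne')
        rw [heq, hgle k2 a2] at this
        exact hnotin k2 h2 a2 this
      · have h1' := hgt k1 h1 a1
        have h2' := hgt k2 h2 a2
        rw [heq] at h1'
        have htk : t k1 = t k2 := h1'.symm.trans h2'
        have : ((k1 : ℝ) + 2) = (k2 : ℝ) + 2 := by
          rw [htdef] at htk
          simp only at htk
          rw [one_div, one_div] at htk
          exact inv_injective htk
        have : (k1 : ℝ) = k2 := by linarith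
        exact_mod_cast this
    have hrange : ∀ k ∈ s, g k ∈ Finset.univ.erase i₀ := by
      intro k hks
      refine Finset.mem_erase.2 ⟨?_, Finset.mem_univ _⟩
      by_cases a : k ≤ n
      · rw [hgle k a]
        intro hcontra
        exact hnotin k hks a (hcontra ▸ hxU')
      · intro hcontra
        have := hgt k hks a
        rw [hcontra] at this
        have hlt := htlt k (not_le.1 a)
        linarith [hi₀]
    have hcard := Finset.card_le_card_of_injOn g hrange hinj
    rw [hs, Finset.card_erase_of_mem (Finset.mem_univ _), Finset.card_univ,
      Fintype.card_fin] at hcard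
    omega
  have hopenU : ∀ k, IsOpen (U k) := by
    intro k
    by_cases h : k ≤ n
    · rw [hUle k h]; exact hopen _
    · obtain ⟨V, hVo, -, -, hVeq⟩ := hdecomp k (not_le.1 h)
      rw [hVeq]; exact isOpen_iUnion hVo
  have hcontrU : ∀ k, ContractibleIn (U k) := by
    intro k
    by_cases h : k ≤ n
    · rw [hUle k h]; exact hcontr _
    · obtain ⟨V, hVo, hVd, hVsub, hVeq⟩ := hdecomp k (not_le.1 h)
      rw [hVeq]
      exact ContractibleIn.iUnion_of_disjoint hVo hVd fun i => (hcontr i).mono (hVsub i)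
  exact ⟨U, hopenU, hUle, hcontrU, hdecomp, hcov⟩
end

section
/- Let f : X → Y be a continuous map, X a path-connected normal topological space, and let {U_0', …, U_n'} be a uniformly f-contractible open cover of X. Then there exists an infinite open (n+1)-cover (U_k)_{k=0}^∞ of X with U_k = U_k' for k ≤ n such that for every m ≥ n, the finite family {U_0, …, U_m} is a uniformly f-contractible (n+1)-cover of X; moreover, for each k > n, U_k is a disjoint union of open sets V_0 ∪ … ∪ V_n with V_i ⊆ U_i'. -/
open Set Topology

/-- A family `U` of subsets of `X` is uniformly `f`-contractible if every `y ∈ Y` has a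
neighborhood `V` such that each `U i ∩ f ⁻¹' V` is `X`-contractible. -/
def UnifContractible {X Y : Type*} [TopologicalSpace X] [TopologicalSpace Y]
    (f : X → Y) {ι : Type*} (U : ι → Set X) : Prop :=
  ∀ y : Y, ∃ V ∈ 𝓝 y, ∀ i, ContractibleIn (U i ∩ f ⁻¹' V)

section Aux

variable {X : Type*} [TopologicalSpace X]


theorem ContractibleIn.mono_s4 {U W : Set X} (h : ContractibleIn U) (hWU : W ⊆ U) :
    ContractibleIn W := by
  have : (⟨fun x => (x : X), continuous_subtype_val⟩ : C(W, X)) =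
      (⟨fun x => (x : X), continuous_subtype_val⟩ : C(U, X)).comp
        ⟨Set.inclusion hWU, continuous_inclusion hWU⟩ := by
    ext x; rfl
  rw [ContractibleIn, this]
  exact h.comp_left _

/-- `ContinuousOn` reformulation of contractibility-in-`X`, with prescribed endpoint. -/
def CIn (U : Set X) (p : X) : Prop :=
  ∃ F : X × ℝ → X, ContinuousOn F (U ×ˢ Icc (0:ℝ) 1) ∧
    (∀ x ∈ U, F (x, 0) = x) ∧ (∀ x ∈ U, F (x, 1) = p)

theorem cIn_empty (p : X) : CIn (∅ : Set X) p := by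
  refine ⟨fun _ => p, ?_, ?_, ?_⟩ <;> simp [ContinuousOn]

theorem ContractibleIn.cIn [PathConnectedSpace X] {U : Set X} (h : ContractibleIn U) (p : X) :
    CIn U p := by
  obtain ⟨q, ⟨H⟩⟩ := h
  obtain γ := (PathConnectedSpace.joined q p).somePath
  let G : ContinuousMap.Homotopy (ContinuousMap.const (↑U) q) (ContinuousMap.const (↑U) p) :=
    { toFun := fun z => γ z.1
      continuous_toFun := γ.continuous.comp continuous_fst
      map_zero_left := fun _ => γ.source
      map_one_left := fun _ => γ.target }
  let H' := H.trans G
  classical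
  refine ⟨fun z => if hz : z.1 ∈ U ∧ z.2 ∈ Icc (0:ℝ) 1 then H' (⟨z.2, hz.2⟩, ⟨z.1, hz.1⟩) else p,
    ?_, ?_, ?_⟩
  · rw [continuousOn_iff_continuous_restrict]
    have hc : Continuous fun z : ↥(U ×ˢ Icc (0:ℝ) 1) =>
        H' (⟨(z : X × ℝ).2, (mem_prod.mp z.2).2⟩, ⟨(z : X × ℝ).1, (mem_prod.mp z.2).1⟩) := by
      apply H'.continuous.comp
      exact Continuous.prodMk
        (Continuous.subtype_mk (continuous_snd.comp continuous_subtype_val) _)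
        (Continuous.subtype_mk (continuous_fst.comp continuous_subtype_val) _)
    convert hc using 1
    funext z
    simp only [Set.restrict_apply]
    rw [dif_pos ⟨(mem_prod.mp z.2).1, (mem_prod.mp z.2).2⟩]
  · intro x hx
    beta_reduce
    rw [dif_pos ⟨hx, by constructor <;> norm_num⟩]
    exact H'.apply_zero ⟨x, hx⟩
  · intro x hx
    beta_reduce
    rw [dif_pos ⟨hx, by constructor <;> norm_num⟩]
    exact H'.apply_one ⟨x, hx⟩

theorem CIn.contractibleIn {U : Set X} {p : X} (h : CIn U p) : ContractibleIn U := by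
  obtain ⟨F, hF, h0, h1⟩ := h
  refine ⟨p, ⟨{ toFun := fun z => F ((z.2 : X), (z.1 : ℝ))
                continuous_toFun := ?_
                map_zero_left := fun x => h0 x x.2
                map_one_left := fun x => h1 x x.2 }⟩⟩
  apply hF.comp_continuous
  · exact Continuous.prodMk (continuous_subtype_val.comp continuous_snd)
      (continuous_subtype_val.comp continuous_fst)
  · exact fun z => mk_mem_prod z.2.2 z.1.2


theorem CIn.union {A B O O' : Set X} {p : X} (hO : IsOpen O) (hO' : IsOpen O')
    (hAO : A ⊆ O) (hBO' : B ⊆ O') (hd : Disjoint O O')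
    (hA : CIn A p) (hB : CIn B p) : CIn (A ∪ B) p := by
  classical
  obtain ⟨FA, hFA, hA0, hA1⟩ := hA
  obtain ⟨FB, hFB, hB0, hB1⟩ := hB
  have hABO : (A ∪ B) ∩ O = A := by
    apply Subset.antisymm
    · rintro x ⟨hx | hx, hxO⟩
      · exact hx
      · exact absurd hxO (disjoint_left.mp (hd.symm) (hBO' hx))
    · exact fun x hx => ⟨Or.inl hx, hAO hx⟩
  have hABO' : (A ∪ B) ∩ O' = B := by
    apply Subset.antisymm
    · rintro x ⟨hx | hx, hxO⟩
      · exact absurd hxO (disjoint_left.mp hd (hAO hx))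
      · exact hx
    · exact fun x hx => ⟨Or.inr hx, hBO' hx⟩
  refine ⟨fun z => if z.1 ∈ O then FA z else FB z, ?_, ?_, ?_⟩
  · intro z hz
    rcases mem_prod.mp hz with ⟨hz1, hz2⟩
    rcases hz1 with hz1 | hz1
    · have hmem : O ×ˢ (univ : Set ℝ) ∈ 𝓝 z :=
        (hO.prod isOpen_univ).mem_nhds (mem_prod.mpr ⟨hAO hz1, mem_univ _⟩)
      have hset : ((A ∪ B) ×ˢ Icc (0:ℝ) 1) ∩ (O ×ˢ (univ : Set ℝ)) = A ×ˢ Icc (0:ℝ) 1 := by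
        rw [prod_inter_prod, inter_univ, hABO]
      have key : ContinuousWithinAt (fun z => if z.1 ∈ O then FA z else FB z)
          (A ×ˢ Icc (0:ℝ) 1) z := by
        refine (hFA z (mem_prod.mpr ⟨hz1, hz2⟩)).congr ?_ ?_
        · intro w hw
          exact if_pos (hAO (mem_prod.mp hw).1)
        · exact if_pos (hAO hz1)
      unfold ContinuousWithinAt at key ⊢
      rwa [nhdsWithin_restrict' _ hmem, hset]
    · have hmem : O' ×ˢ (univ : Set ℝ) ∈ 𝓝 z :=
        (hO'.prod isOpen_univ).mem_nhds (mem_prod.mpr ⟨hBO' hz1, mem_univ _⟩)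
      have hset : ((A ∪ B) ×ˢ Icc (0:ℝ) 1) ∩ (O' ×ˢ (univ : Set ℝ)) = B ×ˢ Icc (0:ℝ) 1 := by
        rw [prod_inter_prod, inter_univ, hABO']
      have key : ContinuousWithinAt (fun z => if z.1 ∈ O then FA z else FB z)
          (B ×ˢ Icc (0:ℝ) 1) z := by
        refine (hFB z (mem_prod.mpr ⟨hz1, hz2⟩)).congr ?_ ?_
        · intro w hw
          exact if_neg (fun hwO => disjoint_left.mp hd hwO (hBO' (mem_prod.mp hw).1))
        · exact if_neg (fun hwO => disjoint_left.mp hd hwO (hBO' hz1))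
      unfold ContinuousWithinAt at key ⊢
      rwa [nhdsWithin_restrict' _ hmem, hset]
  · rintro x (hx | hx)
    · beta_reduce; rw [if_pos (hAO hx)]; exact hA0 x hx
    · beta_reduce; rw [if_neg (fun hxO => disjoint_left.mp hd hxO (hBO' hx))]; exact hB0 x hx
  · rintro x (hx | hx)
    · beta_reduce; rw [if_pos (hAO hx)]; exact hA1 x hx
    · beta_reduce; rw [if_neg (fun hxO => disjoint_left.mp hd hxO (hBO' hx))]; exact hB1 x hx

theorem CIn.finset_biUnion {ι : Type*} [DecidableEq ι] {O S : ι → Set X} {p : X}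
    (hO : ∀ i, IsOpen (O i)) (hd : Pairwise (Function.onFun Disjoint O)) (hS : ∀ i, S i ⊆ O i)
    (h : ∀ i, CIn (S i) p) :
    ∀ s : Finset ι, CIn (⋃ i ∈ s, S i) p := by
  intro s
  induction s using Finset.induction_on with
  | empty => simpa using cIn_empty p
  | @insert a s ha ih =>
      have : (⋃ i ∈ insert a s, S i) = (⋃ i ∈ s, S i) ∪ S a := by
        rw [Finset.set_biUnion_insert, union_comm]
      rw [this]
      refine CIn.union (O := ⋃ i ∈ s, O i) (O' := O a)
        (isOpen_biUnion (fun i _ => hO i)) (hO a)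
        (iUnion₂_mono fun i _ => hS i) (hS a) ?_ ih (h a)
      exact disjoint_iUnion₂_left.mpr fun i hi => hd (fun hia => ha (hia ▸ hi))

end Aux

/-- Theorem 2.5 (uniformly `f`-contractible case): a uniformly `f`-contractible open cover
`U'₀, …, U'ₙ` of a path-connected normal space `X` extends to an infinite open
`(n+1)`-cover `(U_k)` of `X` with `U_k = U'_k` for `k ≤ n` such that each finite
subfamily `U₀, …, U_m` with `m ≥ n` is a uniformly `f`-contractible `(n+1)`-cover of `X`;
moreover each `U_k` with `k > n` is a disjoint union `V₀ ∪ ⋯ ∪ Vₙ` of open sets with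
`V_i ⊆ U'_i`. -/
theorem exists_infinite_unifContractible_nSuccCover_extension
    {X Y : Type*} [TopologicalSpace X] [TopologicalSpace Y] [NormalSpace X]
    [PathConnectedSpace X] (f : X → Y) (hf : Continuous f)
    (n : ℕ) (U' : Fin (n + 1) → Set X)
    (hopen : ∀ i, IsOpen (U' i)) (hcover : ⋃ i, U' i = univ)
    (hunif : UnifContractible f U') :
    ∃ U : ℕ → Set X,
      (∀ k, IsOpen (U k)) ∧
      (∀ k : ℕ, ∀ hk : k ≤ n, U k = U' ⟨k, Nat.lt_succ_of_le hk⟩) ∧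
      (∀ k : ℕ, n < k → ∃ V : Fin (n + 1) → Set X,
        (∀ i, IsOpen (V i)) ∧ Pairwise (Function.onFun Disjoint V) ∧
        (∀ i, V i ⊆ U' i) ∧ U k = ⋃ i, V i) ∧
      (∀ m : ℕ, n ≤ m →
        UnifContractible f (fun i : Fin (m + 1) => U i) ∧
        (∀ s : Finset ℕ, (∀ k ∈ s, k ≤ m) → s.card = n + 1 → ⋃ k ∈ s, U k = univ)) := by
  classical
  -- shrink the cover
  obtain ⟨v, hvU, hvo, hvc⟩ := exists_iUnion_eq_closure_subset hopen (fun x => Set.toFinite _)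
    hcover
  -- Urysohn functions
  have hury : ∀ i : Fin (n+1), ∃ g : C(X, ℝ), EqOn g 0 (U' i)ᶜ ∧ EqOn g 1 (closure (v i)) ∧
      ∀ x, g x ∈ Icc (0:ℝ) 1 := fun i =>
    exists_continuous_zero_one_of_isClosed (hopen i).isClosed_compl isClosed_closure
      (disjoint_compl_left_iff_subset.mpr (hvc i))
  choose gg hgg0 hgg1 hgg01 using hury
  set g' : ℕ → X → ℝ := fun j x => if h : j < n + 1 then gg ⟨j, h⟩ x else 0 with hg'def
  have hg'cont : ∀ j, Continuous (g' j) := by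
    intro j
    by_cases h : j < n + 1 <;> simp only [hg'def, h, dif_pos, dif_neg, not_false_iff]
    · exact (gg ⟨j, h⟩).continuous
    · exact continuous_const
  have hg'nonneg : ∀ j x, 0 ≤ g' j x := by
    intro j x
    by_cases h : j < n + 1 <;> simp only [hg'def, h, dif_pos, dif_neg, not_false_iff]
    · exact (hgg01 ⟨j, h⟩ x).1
    · exact le_refl 0
  have hg'U : ∀ (j) (hj : j < n + 1) (x), 0 < g' j x → x ∈ U' ⟨j, hj⟩ := by
    intro j hj x hx
    by_contra hxU
    have : g' j x = 0 := by simp only [hg'def, dif_pos hj]; exact hgg0 ⟨j, hj⟩ hxU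
    rw [this] at hx; exact lt_irrefl 0 hx
  set T : ℕ → X → ℝ := fun k x => ∑ j ∈ Finset.Ico k (n+1), g' j x with hTdef
  have hTcont : ∀ k, Continuous (T k) := fun k =>
    continuous_finset_sum _ fun j _ => hg'cont j
  have hTnonneg : ∀ k x, 0 ≤ T k x := fun k x =>
    Finset.sum_nonneg fun j _ => hg'nonneg j x
  have hTsplit : ∀ k, k ≤ n → ∀ x, T k x = g' k x + T (k+1) x := by
    intro k hk x
    exact Finset.sum_eq_sum_Ico_succ_bot (Nat.lt_succ_of_le hk) _
  have hTlast : ∀ x, T n x = g' n x := by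
    intro x
    simp only [hTdef]
    rw [Finset.sum_Ico_eq_sum_range]
    simp
  have hT0 : ∀ x, 0 < T 0 x := by
    intro x
    have hx : x ∈ ⋃ i, v i := hvU ▸ mem_univ x
    obtain ⟨i, hi⟩ := mem_iUnion.mp hx
    have h1 : g' i.val x = 1 := by
      simp only [hg'def, dif_pos i.isLt, Fin.eta]
      exact hgg1 i (subset_closure hi)
    calc (0:ℝ) < 1 := one_pos
    _ = g' i.val x := h1.symm
    _ ≤ T 0 x := Finset.single_le_sum (f := fun j => g' j x)
        (fun j _ => hg'nonneg j x) (by simp [Finset.mem_Ico, i.isLt])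

  -- thresholds
  set c : ℕ → ℝ := fun k => ((k : ℝ) + 2)⁻¹ with hcdef
  have hc0 : ∀ k, 0 < c k := by
    intro k
    apply inv_pos.mpr
    positivity
  have hc1 : ∀ k, c k < 1 := by
    intro k
    rw [hcdef]
    rw [inv_lt_one_iff₀]
    right
    have : (0:ℝ) ≤ (k:ℝ) := Nat.cast_nonneg k
    linarith
  have hcinj : Function.Injective c := by
    intro k k' h
    have h2 : ((k:ℝ) + 2) = ((k':ℝ) + 2) := by
      have hk : ((k:ℝ) + 2) ≠ 0 := by positivity
      have hk' : ((k':ℝ) + 2) ≠ 0 := by positivity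
      rw [hcdef] at h
      simp only [inv_inj] at h
      exact h
    have : (k:ℝ) = (k':ℝ) := by linarith
    exact_mod_cast this
  -- the pieces
  set W : ℕ → Fin (n+1) → Set X := fun k i =>
    {x | (∀ j < i.val, g' j x < c k * T j x) ∧ (i.val < n → c k * T i.val x < g' i.val x)}
    with hWdef
  have hWopen : ∀ k i, IsOpen (W k i) := by
    intro k i
    have : W k i = (⋂ j ∈ Finset.range i.val, {x | g' j x < c k * T j x}) ∩
        (if i.val < n then {x | c k * T i.val x < g' i.val x} else univ) := by
      ext x
      by_cases h : i.val < n <;>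
        simp [hWdef, h, Finset.mem_range]
    rw [this]
    apply IsOpen.inter
    · exact isOpen_biInter_finset fun j _ =>
        isOpen_lt (hg'cont j) ((continuous_const).mul (hTcont j))
    · by_cases h : i.val < n <;> simp only [h, if_pos, if_neg, not_false_iff]
      · exact isOpen_lt ((continuous_const).mul (hTcont i.val)) (hg'cont i.val)
      · exact isOpen_univ
  have hWdisj : ∀ k, Pairwise (Function.onFun Disjoint (W k)) := by
    intro k
    intro i i' hii'
    wlog hlt : i < i' generalizing i i'
    · exact (this hii'.symm ((hii'.lt_or_gt).resolve_left hlt)).symm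
    refine Set.disjoint_left.mpr fun x hxi hxi' => ?_
    have hin : i.val < n := lt_of_lt_of_le hlt (Nat.lt_succ_iff.mp i'.isLt)
    have h1 : c k * T i.val x < g' i.val x := hxi.2 hin
    have h2 : g' i.val x < c k * T i.val x := hxi'.1 i.val hlt
    exact lt_irrefl _ (h1.trans h2)
  -- chain positivity
  have hchain : ∀ (x : X) (r : ℝ), r < 1 → ∀ j, j ≤ n →
      (∀ j' < j, g' j' x < r * T j' x) → 0 < T j x := by
    intro x r hr
    intro j
    induction j with
    | zero => intro _ _; exact hT0 x
    | succ j ih =>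
        intro hj hprev
        have hjn : j ≤ n := le_of_lt (lt_of_lt_of_le (Nat.lt_succ_self j) hj)
        have hTj : 0 < T j x := ih hjn (fun j' hj' => hprev j' (hj'.trans (Nat.lt_succ_self j)))
        have hgj : g' j x < r * T j x := hprev j (Nat.lt_succ_self j)
        have hsplit := hTsplit j hjn x
        have : T (j+1) x = T j x - g' j x := by linarith
        rw [this]
        nlinarith
  have hWsub : ∀ k i, W k i ⊆ U' i := by
    intro k i x hx
    rcases Nat.lt_or_ge i.val n with hin | hin
    · have h1 : c k * T i.val x < g' i.val x := hx.2 hin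
      have h2 : 0 < g' i.val x :=
        lt_of_le_of_lt (mul_nonneg (hc0 k).le (hTnonneg i.val x)) h1
      have := hg'U i.val i.isLt x h2
      simpa using this
    · have hin' : i.val = n := le_antisymm (Nat.lt_succ_iff.mp i.isLt) hin
      have hTn : 0 < T n x := hchain x (c k) (hc1 k) n (le_refl n)
        (fun j' hj' => hx.1 j' (by rw [hin']; exact hj'))
      have h2 : 0 < g' n x := by rw [← hTlast x]; exact hTn
      have := hg'U n (Nat.lt_succ_self n) x h2
      have hi : i = ⟨n, Nat.lt_succ_self n⟩ := Fin.ext hin'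
      rw [hi]; exact this

  -- The extended family
  set U : ℕ → Set X := fun k =>
    if h : k ≤ n then U' ⟨k, Nat.lt_succ_of_le h⟩ else ⋃ i, W k i with hUdef
  -- witness extraction
  have hwit : ∀ k, ¬ k ≤ n → ∀ x, x ∉ U k → ∃ j, j < n ∧
      (∀ j' < j, g' j' x < c k * T j' x) ∧ g' j x = c k * T j x ∧ 0 < T j x := by
    intro k hk x hxU
    rw [hUdef] at hxU
    simp only [dif_neg hk] at hxU
    rw [mem_iUnion] at hxU
    push_neg at hxU
    by_cases hall : ∀ j, j < n → g' j x < c k * T j x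
    · exfalso
      apply hxU ⟨n, Nat.lt_succ_self n⟩
      constructor
      · intro j hj; exact hall j hj
      · intro h; exact absurd h (lt_irrefl n)
    · push_neg at hall
      have hex : ∃ j, j < n ∧ c k * T j x ≤ g' j x := by
        obtain ⟨j, hj, hj2⟩ := hall
        exact ⟨j, hj, hj2⟩
      set j₀ := Nat.find hex with hj₀def
      obtain ⟨hj₀n, hj₀ge⟩ := Nat.find_spec hex
      have hprev : ∀ j' < j₀, g' j' x < c k * T j' x := by
        intro j' hj'
        have := Nat.find_min hex hj'
        push_neg at this
        exact this (hj'.trans hj₀n)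
      have heq : g' j₀ x = c k * T j₀ x := by
        rcases lt_or_eq_of_le hj₀ge with hlt | heq
        · exfalso
          apply hxU ⟨j₀, hj₀n.trans (Nat.lt_succ_self n)⟩
          exact ⟨hprev, fun _ => hlt⟩
        · exact heq.symm
      have hTpos : 0 < T j₀ x := hchain x (c k) (hc1 k) j₀ hj₀n.le hprev
      exact ⟨j₀, hj₀n, hprev, heq, hTpos⟩
  -- x not in U' k (k ≤ n) kills g'
  have hg'zero : ∀ (k) (hk : k ≤ n) (x), x ∉ U' ⟨k, Nat.lt_succ_of_le hk⟩ → g' k x = 0 := by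
    intro k hk x hxU
    rcases lt_or_eq_of_le (hg'nonneg k x) with h | h
    · exact absurd (hg'U k (Nat.lt_succ_of_le hk) x h) hxU
    · exact h.symm
  -- the main covering property
  have hcov : ∀ s : Finset ℕ, s.card = n + 1 → ⋃ k ∈ s, U k = univ := by
    intro s hcard
    rw [eq_univ_iff_forall]
    intro x
    by_contra hx
    have hx' : ∀ k ∈ s, x ∉ U k := by
      intro k hk hmem
      exact hx (mem_biUnion hk hmem)
    -- the marking function
    set φ : ℕ → Fin (n+1) := fun k =>
      if h : k ≤ n then ⟨k, Nat.lt_succ_of_le h⟩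
      else if hk : x ∉ U k then
        ⟨(hwit k h x hk).choose, ((hwit k h x hk).choose_spec.1).trans (Nat.lt_succ_self n)⟩
      else ⟨0, Nat.succ_pos n⟩ with hφdef
    have hφold : ∀ k (h : k ≤ n), φ k = ⟨k, Nat.lt_succ_of_le h⟩ := by
      intro k h; simp only [hφdef, dif_pos h]
    have hφnew : ∀ k, ¬ k ≤ n → ∀ hk : x ∉ U k,
        (φ k).val < n ∧ (∀ j' < (φ k).val, g' j' x < c k * T j' x) ∧
        g' (φ k).val x = c k * T (φ k).val x ∧ 0 < T (φ k).val x := by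
      intro k h hk
      simp only [hφdef, dif_neg h, dif_pos hk]
      exact (hwit k h x hk).choose_spec
    have hg'old : ∀ k ∈ s, k ≤ n → g' k x = 0 := by
      intro k hks hk
      apply hg'zero k hk
      intro hmem
      apply hx' k hks
      rw [hUdef]; simp only [dif_pos hk]
      exact hmem
    have hg'new : ∀ k ∈ s, ¬ k ≤ n → 0 < g' (φ k).val x := by
      intro k hks hk
      obtain ⟨_, _, heq, hT⟩ := hφnew k hk (hx' k hks)
      rw [heq]
      exact mul_pos (hc0 k) hT
    -- injectivity on s
    have hinj : Set.InjOn φ s := by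
      intro k hks k' hks' hφeq
      by_cases h : k ≤ n <;> by_cases h' : k' ≤ n
      · have e1 := hφold k h
        have e2 := hφold k' h'
        rw [e1, e2] at hφeq
        exact congrArg Fin.val hφeq
      · exfalso
        have hz : g' k x = 0 := hg'old k hks h
        have hp : 0 < g' (φ k').val x := hg'new k' hks' h'
        rw [← hφeq] at hp
        rw [hφold k h] at hp
        simp only at hp
        rw [hz] at hp
        exact lt_irrefl 0 hp
      · exfalso
        have hz : g' k' x = 0 := hg'old k' hks' h'
        have hp : 0 < g' (φ k).val x := hg'new k hks h
        rw [hφeq] at hp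
        rw [hφold k' h'] at hp
        simp only at hp
        rw [hz] at hp
        exact lt_irrefl 0 hp
      · obtain ⟨_, _, heq, hT⟩ := hφnew k h (hx' k hks)
        obtain ⟨_, _, heq', _⟩ := hφnew k' h' (hx' k' hks')
        rw [hφeq] at heq
        have : c k * T (φ k').val x = c k' * T (φ k').val x := by rw [← heq, heq']
        rw [hφeq] at hT
        have hc : c k = c k' := by
          exact mul_right_cancel₀ (ne_of_gt hT) this
        exact hcinj hc
    -- surjectivity
    have himg : s.image φ = Finset.univ := by
      apply Finset.eq_univ_of_card
      rw [Finset.card_image_of_injOn hinj, hcard, Fintype.card_fin]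
    have hsurj : ∀ i : Fin (n+1), ∃ k ∈ s, φ k = i := by
      intro i
      have : i ∈ s.image φ := himg ▸ Finset.mem_univ i
      rw [Finset.mem_image] at this
      obtain ⟨k, hk, hφk⟩ := this
      exact ⟨k, hk, hφk⟩
    -- final contradiction
    by_cases hflt : (s.filter (fun k => ¬ k ≤ n)).Nonempty
    · -- there is at least one "new" index in s
      obtain ⟨kex, hkex⟩ := hflt
      set wit := (s.filter (fun k => ¬ k ≤ n)).image (fun k => (φ k).val) with hwitdef
      have hwitne : wit.Nonempty := ⟨(φ kex).val, Finset.mem_image_of_mem _ hkex⟩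
      set jmax := wit.max' hwitne with hjmaxdef
      have hjm : jmax ∈ wit := Finset.max'_mem wit hwitne
      rw [hwitdef, Finset.mem_image] at hjm
      obtain ⟨kw, hkwf, hkwφ⟩ := hjm
      rw [Finset.mem_filter] at hkwf
      obtain ⟨hkws, hkwn⟩ := hkwf
      obtain ⟨hjn, hprev, heq, hTpos⟩ := hφnew kw hkwn (hx' kw hkws)
      rw [hkwφ] at hjn hprev heq hTpos
      have hzero2 : ∀ j, jmax < j → j ≤ n → g' j x = 0 := by
        intro j hj1 hj2
        obtain ⟨k, hks, hφk⟩ := hsurj ⟨j, Nat.lt_succ_of_le hj2⟩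
        by_cases hkn : k ≤ n
        · rw [hφold k hkn] at hφk
          have hkj : k = j := congrArg Fin.val hφk
          subst hkj
          exact hg'old k hks hkn
        · exfalso
          have : (φ k).val ∈ wit := by
            rw [hwitdef, Finset.mem_image]
            exact ⟨k, Finset.mem_filter.mpr ⟨hks, hkn⟩, rfl⟩
          have hle : (φ k).val ≤ jmax := Finset.le_max' wit _ this
          rw [hφk] at hle
          simp only at hle
          omega
      have hT1 : T (jmax + 1) x = 0 := by
        apply Finset.sum_eq_zero
        intro j hj
        rw [Finset.mem_Ico] at hj
        exact hzero2 j hj.1 (Nat.lt_succ_iff.mp hj.2)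
      have hTm := hTsplit jmax hjn.le x
      have hck := hc1 kw
      nlinarith
    · -- all indices in s are old: all g' vanish, contradicting positivity of T 0
      rw [Finset.not_nonempty_iff_eq_empty] at hflt
      have hold : ∀ k ∈ s, k ≤ n := by
        intro k hk
        by_contra hkn
        have : k ∈ s.filter (fun k => ¬ k ≤ n) := Finset.mem_filter.mpr ⟨hk, hkn⟩
        rw [hflt] at this
        exact absurd this (Finset.notMem_empty k)
      have hzero : ∀ j, j ≤ n → g' j x = 0 := by
        intro j hj
        obtain ⟨k, hks, hφk⟩ := hsurj ⟨j, Nat.lt_succ_of_le hj⟩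
        have hkn := hold k hks
        rw [hφold k hkn] at hφk
        have hkj : k = j := congrArg Fin.val hφk
        subst hkj
        exact hg'old k hks hkn
      have : T 0 x = 0 := by
        apply Finset.sum_eq_zero
        intro j hj
        rw [Finset.mem_Ico] at hj
        exact hzero j (Nat.lt_succ_iff.mp hj.2)
      have := hT0 x
      linarith
  -- Assemble the answer
  refine ⟨U, ?_, ?_, ?_, ?_⟩
  · intro k
    rw [hUdef]
    by_cases h : k ≤ n
    · simp only [dif_pos h]; exact hopen _
    · simp only [dif_neg h]; exact isOpen_iUnion (hWopen k)
  · intro k hk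
    rw [hUdef]
    simp only [dif_pos hk]
  · intro k hk
    have h : ¬ k ≤ n := not_le.mpr hk
    refine ⟨W k, hWopen k, hWdisj k, hWsub k, ?_⟩
    rw [hUdef]
    simp only [dif_neg h]
  · intro m _
    constructor
    · intro y
      obtain ⟨V, hV, hCV⟩ := hunif y
      refine ⟨V, hV, ?_⟩
      intro i
      obtain ⟨p⟩ : Nonempty X := inferInstance
      by_cases h : (i : ℕ) ≤ n
      · have hUi : U i.val = U' ⟨i.val, Nat.lt_succ_of_le h⟩ := by
          rw [hUdef]; simp only [dif_pos h]
        beta_reduce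
        rw [hUi]
        exact hCV _
      · have hUk : U i.val = ⋃ j, W i.val j := by rw [hUdef]; simp only [dif_neg h]
        beta_reduce
        rw [hUk, iUnion_inter]
        have hC : CIn (⋃ j ∈ (Finset.univ : Finset (Fin (n+1))), (W i.val j ∩ f ⁻¹' V)) p :=
          CIn.finset_biUnion (O := W i.val) (hWopen i.val) (hWdisj i.val)
            (fun j => inter_subset_left)
            (fun j => ((hCV j).mono_s4 (inter_subset_inter (hWsub i.val j) Subset.rfl)).cIn p)
            Finset.univ
        have heq : (⋃ j ∈ (Finset.univ : Finset (Fin (n+1))), (W i.val j ∩ f ⁻¹' V)) =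
            ⋃ j, W i.val j ∩ f ⁻¹' V := by simp
        rw [heq] at hC
        exact hC.contractibleIn
    · intro s _ hcard
      exact hcov s hcard
end

section
/- Let X be a path-connected normal topological space and n a natural number. Then cat X ≤ n if and only if for every m > n, X admits a family of m open X-contractible sets that is an (n+1)-cover of X (every n+1 members of the family cover X). -/
open Set

/-- `cat X ≤ n` : the Lusternik–Schnirelmann category of `X` is at most `n`, i.e.
`X` admits an open cover by `n + 1` `X`-contractible sets. -/
def CatLE (X : Type*) [TopologicalSpace X] (n : ℕ) : Prop :=
  ∃ U : Fin (n + 1) → Set X,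
    (∀ i, IsOpen (U i)) ∧ (∀ i, ContractibleIn (U i)) ∧ (⋃ i, U i) = univ

private lemma transcendental_Q_theta : Transcendental ℚ (liouvilleNumber 3) := by
  have h1 : Transcendental ℤ (liouvilleNumber 3) := by
    have := transcendental_liouvilleNumber (m := 3) (by norm_num)
    simpa using this
  intro halg
  exact h1 ((IsFractionRing.isAlgebraic_iff ℤ ℚ ℝ).mpr halg)

private lemma linIndep_pow_of_transcendental {θ : ℝ} (h : Transcendental ℚ θ) :
    LinearIndependent ℚ fun r : ℕ => θ ^ r := by
  rw [transcendental_iff] at h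
  rw [linearIndependent_iff]
  intro l hl
  have h0 : Polynomial.aeval θ (⟨AddMonoidAlgebra.ofCoeff l⟩ : Polynomial ℚ) = 0 := by
    rw [Polynomial.aeval_def, Polynomial.eval₂_eq_sum]
    rw [Finsupp.linearCombination_apply] at hl
    simpa [Polynomial.sum, Finsupp.sum, Algebra.smul_def] using hl
  exact AddMonoidAlgebra.ofCoeff_eq_zero.mp (Polynomial.ofFinsupp_eq_zero.mp (h _ h0))

lemma contractibleIn_iUnion_of_disjoint {X : Type*} [TopologicalSpace X] [PathConnectedSpace X]
    {ι : Type*} (P : ι → Set X) (hopen : ∀ i, IsOpen (P i))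
    (hdisj : ∀ i j, i ≠ j → ∀ x, x ∈ P i → x ∈ P j → False)
    (hc : ∀ i, ContractibleIn (P i)) : ContractibleIn (⋃ i, P i) := by
  classical
  obtain ⟨x₀⟩ : Nonempty X := inferInstance
  have key : ∀ i, Nonempty (ContinuousMap.Homotopy
      (⟨fun x => (x : X), continuous_subtype_val⟩ : C(P i, X))
      (ContinuousMap.const _ x₀)) := by
    intro i
    obtain ⟨y, hy⟩ := hc i
    exact hy.trans ⟨(PathConnectedSpace.somePath y x₀).toHomotopyConst⟩
  let H : ∀ i, ContinuousMap.Homotopy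
      (⟨fun x => (x : X), continuous_subtype_val⟩ : C(P i, X))
      (ContinuousMap.const _ x₀) := fun i => (key i).some
  set S := ⋃ i, P i with hS
  have memS : ∀ z : S, ∃ i, (z : X) ∈ P i := fun z => mem_iUnion.mp z.2
  let idx : S → ι := fun z => (memS z).choose
  have hidx : ∀ z : S, (z : X) ∈ P (idx z) := fun z => (memS z).choose_spec
  let F : unitInterval × S → X := fun q => H (idx q.2) (q.1, ⟨(q.2 : X), hidx q.2⟩)
  have keyF : ∀ (t : unitInterval) (z : S) (i : ι) (hz : (z : X) ∈ P i),
      F (t, z) = H i (t, ⟨(z : X), hz⟩) := by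
    intro t z i hz
    have hiz : idx z = i := by
      by_contra hne
      exact hdisj _ _ hne _ (hidx z) hz
    subst hiz
    rfl
  have contF : Continuous F := by
    rw [continuous_iff_continuousAt]
    rintro ⟨t, z⟩
    have hzi : (z : X) ∈ P (idx z) := hidx z
    have hV : IsOpen {w : S | (w : X) ∈ P (idx z)} :=
      (hopen (idx z)).preimage continuous_subtype_val
    have hmem : (univ ×ˢ {w : S | (w : X) ∈ P (idx z)}) ∈ nhds (t, z) :=
      prod_mem_nhds Filter.univ_mem (hV.mem_nhds hzi)
    refine ContinuousOn.continuousAt ?_ hmem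
    rw [continuousOn_iff_continuous_restrict]
    have hres : (univ ×ˢ {w : S | (w : X) ∈ P (idx z)}).domRestrict F
        = fun p => H (idx z) (p.1.1, ⟨((p.1.2 : S) : X), p.2.2⟩) := by
      funext p
      exact keyF p.1.1 p.1.2 (idx z) p.2.2
    rw [hres]
    apply (H (idx z)).continuous.comp
    refine Continuous.prodMk ?_ ?_
    · exact continuous_fst.comp continuous_subtype_val
    · exact Continuous.subtype_mk
        (continuous_subtype_val.comp (continuous_snd.comp continuous_subtype_val)) _
  refine ⟨x₀, ⟨⟨⟨F, contF⟩, ?_, ?_⟩⟩⟩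
  · intro z
    exact (H (idx z)).map_zero_left ⟨(z : X), hidx z⟩
  · intro z
    exact (H (idx z)).map_one_left ⟨(z : X), hidx z⟩

private lemma exists_cover_of_catLE {X : Type*} [TopologicalSpace X] [NormalSpace X]
    [PathConnectedSpace X] {n : ℕ} (h : CatLE X n) (m : ℕ) (hm : n < m) :
    ∃ W : Fin m → Set X, (∀ j, IsOpen (W j)) ∧ (∀ j, ContractibleIn (W j)) ∧
      (∀ s : Finset (Fin m), s.card = n + 1 → ⋃ j ∈ s, W j = univ) := by
  classical
  obtain ⟨U, hUo, hUc, hUcov⟩ := h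
  obtain ⟨f, hfsub⟩ := BumpCovering.exists_isSubordinate_of_locallyFinite isClosed_univ U hUo
      (locallyFinite_of_finite U) (by rw [hUcov])
  have hfnn : ∀ i x, 0 ≤ f i x := fun i x => f.nonneg i x
  have hfpos : ∀ x : X, ∃ i, 0 < f i x := fun x =>
    ⟨f.ind x (mem_univ x), by rw [f.ind_apply x (mem_univ x)]; norm_num⟩
  set θ := liouvilleNumber 3 with hθ
  have hLI : LinearIndependent ℚ
      (fun p : Fin m × Fin (n + 1) => θ ^ ((finProdFinEquiv p : ℕ))) := by
    have h1 := linIndep_pow_of_transcendental transcendental_Q_theta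
    exact h1.comp _ (Fin.val_injective.comp finProdFinEquiv.injective)
  set ee : Fin m → Fin (n + 1) → ℝ := fun j i => θ ^ ((finProdFinEquiv (j, i) : ℕ)) with hee
  set b : Fin m → Fin (n + 1) → ℝ := fun j i => Real.exp (ee j i) with hb
  have hbpos : ∀ j i, 0 < b j i := fun j i => Real.exp_pos _
  set P : Fin m → Fin (n + 1) → Set X :=
    fun j i => {x | ∀ k, k ≠ i → f k x * b j k < f i x * b j i} with hP
  have hPopen : ∀ j i, IsOpen (P j i) := by
    intro j i
    have hPi : P j i = ⋂ k, {x | k ≠ i → f k x * b j k < f i x * b j i} := by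
      ext x; simp [hP, mem_iInter]
    rw [hPi]
    refine isOpen_iInter_of_finite fun k => ?_
    by_cases hk : k = i
    · subst hk
      simp
    · have hset : {x | k ≠ i → f k x * b j k < f i x * b j i}
          = {x | f k x * b j k < f i x * b j i} := by
        ext x; simp [hk]
      rw [hset]
      exact isOpen_lt (((f k).continuous).mul continuous_const)
        (((f i).continuous).mul continuous_const)
  have hfi_pos : ∀ j i x, x ∈ P j i → 0 < f i x := by
    intro j i x hx
    obtain ⟨k', hk'⟩ := hfpos x
    by_cases hki : k' = i
    · rwa [hki] at hk'
    · have h1 : f k' x * b j k' < f i x * b j i := hx k' hki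
      have h3 : 0 < f i x * b j i := (mul_pos hk' (hbpos j k')).trans h1
      rcases (hfnn i x).lt_or_eq with hlt | heq
      · exact hlt
      · exfalso; rw [← heq] at h3; simp at h3
  have hPsub : ∀ j i, P j i ⊆ U i := by
    intro j i x hx
    have hts : x ∈ tsupport (f i) := subset_closure (by
      simp only [Function.mem_support]
      exact (hfi_pos j i x hx).ne')
    exact hfsub i hts
  have hPdisj : ∀ j, ∀ i i', i ≠ i' → ∀ x, x ∈ P j i → x ∈ P j i' → False := by
    intro j i i' hne x hx hx'
    exact lt_asymm (hx i' (Ne.symm hne)) (hx' i hne)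
  refine ⟨fun j => ⋃ i, P j i, fun j => isOpen_iUnion fun i => hPopen j i, ?_, ?_⟩
  · intro j
    exact contractibleIn_iUnion_of_disjoint (P j) (hPopen j) (hPdisj j)
      (fun i => (hUc i).mono (hPsub j i))
  · intro s hs
    rw [eq_univ_iff_forall]
    intro x
    by_contra hx
    simp only [mem_iUnion, not_exists] at hx
    -- extract tie data for each j ∈ s
    have tie : ∀ j : {j // j ∈ s}, ∃ a c : Fin (n+1), a ≠ c ∧ 0 < f a x ∧ 0 < f c x ∧
        Real.log (f a x) + ee j.1 a = Real.log (f c x) + ee j.1 c := by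
      rintro ⟨j, hj⟩
      obtain ⟨a, -, ha⟩ := Finset.exists_max_image Finset.univ (fun i => f i x * b j i)
        ⟨0, Finset.mem_univ 0⟩
      have hxa : x ∉ P j a := by
        intro hmemP
        exact hx j hj a hmemP
      have hexk : ∃ k, k ≠ a ∧ ¬(f k x * b j k < f a x * b j a) := by
        by_contra hcon
        push_neg at hcon
        exact hxa fun k hk => hcon k hk
      obtain ⟨c, hca, hc⟩ := hexk
      push_neg at hc
      have heq : f a x * b j a = f c x * b j c := le_antisymm hc (ha c (Finset.mem_univ c))
      obtain ⟨k', hk'⟩ := hfpos x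
      have hapos : 0 < f a x * b j a :=
        lt_of_lt_of_le (mul_pos hk' (hbpos j k')) (ha k' (Finset.mem_univ k'))
      have hfa : 0 < f a x := by
        rcases (hfnn a x).lt_or_eq with hlt | heq2
        · exact hlt
        · exfalso; rw [← heq2] at hapos; simp at hapos
      have hcpos : 0 < f c x * b j c := heq ▸ hapos
      have hfc : 0 < f c x := by
        rcases (hfnn c x).lt_or_eq with hlt | heq2
        · exact hlt
        · exfalso; rw [← heq2] at hcpos; simp at hcpos
      refine ⟨a, c, fun hac => hca (hac.symm), hfa, hfc, ?_⟩
      have hlog := congrArg Real.log heq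
      rw [hb] at hlog
      simp only at hlog
      rw [Real.log_mul hfa.ne' (Real.exp_pos _).ne',
        Real.log_mul hfc.ne' (Real.exp_pos _).ne', Real.log_exp, Real.log_exp] at hlog
      exact hlog
    choose A B hAB hfA hfB hlog using tie
    set supp : Finset (Fin (n+1)) := Finset.univ.filter (fun i => f i x ≠ 0) with hsupp
    have hmemsupp : ∀ i, i ∈ supp ↔ f i x ≠ 0 := by intro i; simp [hsupp]
    obtain ⟨i₀, hi₀⟩ : ∃ i, i ∈ supp := by
      obtain ⟨k', hk'⟩ := hfpos x; exact ⟨k', (hmemsupp k').mpr hk'.ne'⟩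
    have hcard' : (supp.erase i₀).card ≤ n := by
      have h1 : supp.card ≤ n + 1 := (Finset.card_le_univ supp).trans (by simp)
      have h2 : (supp.erase i₀).card = supp.card - 1 := Finset.card_erase_of_mem hi₀
      have h3 : 0 < supp.card := Finset.card_pos.mpr ⟨i₀, hi₀⟩
      omega
    set v : {j // j ∈ s} → (Fin (n+1) → ℚ) :=
      fun j i => (if i = A j then 1 else 0) - (if i = B j then 1 else 0) with hv
    set π : (Fin (n+1) → ℚ) →ₗ[ℚ] ({ i // i ∈ supp.erase i₀ } → ℚ) :=
      LinearMap.funLeft ℚ ℚ (fun i => i.1) with hπ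
    have hdep : ¬ LinearIndependent ℚ (fun j : {j // j ∈ s} => π (v j)) := by
      intro hli
      have hcle := hli.fintype_card_le_finrank
      rw [Fintype.card_coe, hs, Module.finrank_pi, Fintype.card_coe] at hcle
      omega
    obtain ⟨g, hg, j₀, hgj₀⟩ := Fintype.not_linearIndependent_iff.mp hdep
    set w : Fin (n+1) → ℚ := ∑ j : {j // j ∈ s}, g j • v j with hw
    have hwsupp' : ∀ i, i ∈ supp.erase i₀ → w i = 0 := by
      intro i hi
      have h2 := congrFun hg ⟨i, hi⟩
      simpa [hw, hπ, Finset.sum_apply, LinearMap.funLeft_apply] using h2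
    have hABsupp : ∀ j : {j // j ∈ s}, A j ∈ supp ∧ B j ∈ supp := fun j =>
      ⟨(hmemsupp _).mpr (hfA j).ne', (hmemsupp _).mpr (hfB j).ne'⟩
    have hwoff : ∀ i, i ∉ supp → w i = 0 := by
      intro i hi
      have hvz : ∀ j : {j // j ∈ s}, v j i = 0 := by
        intro j
        have h1 : i ≠ A j := fun hh => hi (hh ▸ (hABsupp j).1)
        have h2 : i ≠ B j := fun hh => hi (hh ▸ (hABsupp j).2)
        simp [hv, h1, h2]
      simp [hw, Finset.sum_apply, hvz]
    have hvsum : ∀ j : {j // j ∈ s}, ∑ i, v j i = 0 := by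
      intro j
      simp [hv, Finset.sum_sub_distrib, Finset.sum_ite_eq']
    have hwsum : ∑ i, w i = 0 := by
      calc ∑ i, w i = ∑ i, ∑ j : {j // j ∈ s}, g j * v j i := by
            simp [hw, Finset.sum_apply, smul_eq_mul]
      _ = ∑ j : {j // j ∈ s}, ∑ i, g j * v j i := Finset.sum_comm
      _ = ∑ j : {j // j ∈ s}, g j * ∑ i, v j i := by
            simp [Finset.mul_sum]
      _ = 0 := by simp [hvsum]
    have hwzero : ∀ i, w i = 0 := by
      intro i
      by_cases hii : i = i₀
      · subst hii
        have h1 : ∑ k ∈ Finset.univ.erase i, w k = 0 :=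
          Finset.sum_eq_zero (fun k hk => by
            have hki : k ≠ i := (Finset.mem_erase.mp hk).1
            by_cases hks : k ∈ supp
            · exact hwsupp' k (Finset.mem_erase.mpr ⟨hki, hks⟩)
            · exact hwoff k hks)
        have h2 := Finset.sum_erase_add Finset.univ w (Finset.mem_univ i)
        rw [h1, hwsum] at h2
        linarith
      · by_cases hks : i ∈ supp
        · exact hwsupp' i (Finset.mem_erase.mpr ⟨hii, hks⟩)
        · exact hwoff i hks
    set u : Fin (n+1) → ℝ := fun i => Real.log (f i x) with hu
    have claim1 : ∀ j : {j // j ∈ s}, u (A j) - u (B j) = ee j.1 (B j) - ee j.1 (A j) := by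
      intro j
      have hl := hlog j
      simp only [hu]
      linarith
    have e1 : ∀ j : {j // j ∈ s}, u (A j) - u (B j) = ∑ i, ((v j i : ℝ)) * u i := by
      intro j
      have hcast : ∀ i, ((v j i : ℝ))
          = (if i = A j then (1:ℝ) else 0) - (if i = B j then 1 else 0) := by
        intro i
        simp [hv, apply_ite (fun q : ℚ => (q : ℝ))]
      simp only [hcast, sub_mul, ite_mul, one_mul, zero_mul]
      rw [Finset.sum_sub_distrib, Finset.sum_ite_eq', Finset.sum_ite_eq']
      simp
    have claim2 : ∑ j : {j // j ∈ s}, (g j : ℝ) * (ee j.1 (B j) - ee j.1 (A j)) = 0 := by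
      have hwcast : ∀ i, (∑ j : {j // j ∈ s}, (g j : ℝ) * (v j i : ℝ)) = 0 := by
        intro i
        have := hwzero i
        rw [hw] at this
        simp only [Finset.sum_apply, Pi.smul_apply, smul_eq_mul] at this
        have hc := congrArg (fun q : ℚ => (q : ℝ)) this
        push_cast at hc
        simpa using hc
      calc ∑ j : {j // j ∈ s}, (g j : ℝ) * (ee j.1 (B j) - ee j.1 (A j))
          = ∑ j : {j // j ∈ s}, (g j : ℝ) * (u (A j) - u (B j)) := by
            simp only [claim1]
      _ = ∑ j : {j // j ∈ s}, (g j : ℝ) * ∑ i, ((v j i : ℝ)) * u i := by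
            simp only [e1]
      _ = ∑ j : {j // j ∈ s}, ∑ i, (g j : ℝ) * (((v j i : ℝ)) * u i) := by
            simp [Finset.mul_sum]
      _ = ∑ i, ∑ j : {j // j ∈ s}, (g j : ℝ) * (((v j i : ℝ)) * u i) := Finset.sum_comm
      _ = ∑ i, (∑ j : {j // j ∈ s}, (g j : ℝ) * (v j i : ℝ)) * u i := by
            congr 1
            funext i
            rw [Finset.sum_mul]
            congr 1
            funext j
            ring
      _ = 0 := by
            simp only [Finset.univ_eq_attach] at hwcast ⊢
            exact Finset.sum_eq_zero fun i _ => by rw [hwcast i, zero_mul]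
    set G : Fin m × Fin (n+1) → ℚ := fun p =>
      ∑ j : {j // j ∈ s},
        ((if p = (j.1, B j) then g j else 0) - (if p = (j.1, A j) then g j else 0)) with hG
    have hGsum : ∑ p : Fin m × Fin (n+1), G p • (θ ^ ((finProdFinEquiv p : ℕ))) = 0 := by
      calc ∑ p : Fin m × Fin (n+1), G p • (θ ^ ((finProdFinEquiv p : ℕ)))
          = ∑ p : Fin m × Fin (n+1), ∑ j : {j // j ∈ s},
            ((if p = (j.1, B j) then g j • θ ^ ((finProdFinEquiv p : ℕ)) else 0)
              - (if p = (j.1, A j) then g j • θ ^ ((finProdFinEquiv p : ℕ)) else 0)) := by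
            refine Finset.sum_congr rfl fun p _ => ?_
            rw [hG]
            rw [Finset.sum_smul]
            refine Finset.sum_congr rfl fun j _ => ?_
            simp [sub_smul, ite_smul]
      _ = ∑ j : {j // j ∈ s}, ∑ p : Fin m × Fin (n+1),
            ((if p = (j.1, B j) then g j • θ ^ ((finProdFinEquiv p : ℕ)) else 0)
              - (if p = (j.1, A j) then g j • θ ^ ((finProdFinEquiv p : ℕ)) else 0)) :=
            Finset.sum_comm
      _ = ∑ j : {j // j ∈ s}, (g j • ee j.1 (B j) - g j • ee j.1 (A j)) := by
            refine Finset.sum_congr rfl fun j _ => ?_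
            simp [Finset.sum_sub_distrib, Finset.sum_ite_eq', hee]
      _ = ∑ j : {j // j ∈ s}, (g j : ℝ) * (ee j.1 (B j) - ee j.1 (A j)) := by
            refine Finset.sum_congr rfl fun j _ => ?_
            rw [Rat.smul_def, Rat.smul_def]
            ring
      _ = 0 := claim2
    have hGzero := Fintype.linearIndependent_iff.mp hLI G hGsum
    have hGval : G (j₀.1, B j₀) = g j₀ := by
      simp only [hG]
      rw [Finset.sum_eq_single j₀]
      · have hne : (j₀.1, B j₀) ≠ (j₀.1, A j₀) := by
          intro hpe
          exact hAB j₀ ((Prod.ext_iff.mp hpe).2.symm)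
        simp [hne]
      · intro j _ hjne
        have hj1 : j₀.1 ≠ j.1 := fun hh => hjne (Subtype.ext hh.symm)
        have hne1 : (j₀.1, B j₀) ≠ (j.1, B j) := fun hpe => hj1 (Prod.ext_iff.mp hpe).1
        have hne2 : (j₀.1, B j₀) ≠ (j.1, A j) := fun hpe => hj1 (Prod.ext_iff.mp hpe).1
        simp [hne1, hne2]
      · intro hj
        exact absurd (Finset.mem_univ j₀) hj
    rw [hGzero (j₀.1, B j₀)] at hGval
    exact hgj₀ hGval.symm

/-- Ostrand-type characterization of the LS-category: for a path-connected normal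
space `X`, `cat X ≤ n` iff for every `m > n` there is a family of `m` open
`X`-contractible sets every `n + 1` of which cover `X`. -/
theorem catLE_iff_forall_exists_nSuccCover
    (X : Type*) [TopologicalSpace X] [NormalSpace X] [PathConnectedSpace X] (n : ℕ) :
    CatLE X n ↔
      ∀ m : ℕ, n < m →
        ∃ U : Fin m → Set X,
          (∀ i, IsOpen (U i)) ∧
          (∀ i, ContractibleIn (U i)) ∧
          (∀ s : Finset (Fin m), s.card = n + 1 → ⋃ i ∈ s, U i = univ) := by
  constructor
  · intro h m hm
    exact exists_cover_of_catLE h m hm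
  · intro h
    obtain ⟨U, hUo, hUc, hUcov⟩ := h (n + 1) (by omega)
    refine ⟨U, hUo, hUc, ?_⟩
    have hcov := hUcov Finset.univ (by simp)
    simpa using hcov
end

section
/- Let p : X → Y be a closed continuous map, where X is a path-connected normal topological space and Y is a metrizable space with covering dimension dim Y ≤ n. If for every y ∈ Y the fiber p⁻¹(y) has an open neighborhood in X that is X-contractible, then cat X ≤ n. (In particular cat* p = 0 under these hypotheses.) -/
open Set Topology

/-- `cat* f ≤ n` : `X` admits a uniformly `f`-contractible open cover by `n + 1` sets. -/
def CatStarLE {X Y : Type*} [TopologicalSpace X] [TopologicalSpace Y]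
    (f : X → Y) (n : ℕ) : Prop :=
  ∃ U : Fin (n + 1) → Set X,
    (∀ i, IsOpen (U i)) ∧ (⋃ i, U i) = univ ∧ UnifContractible f U

/-- `dim Y ≤ n` : every open cover of `Y` admits an open refinement of multiplicity
at most `n + 1` (covering dimension). -/
def CovDimLE (Y : Type*) [TopologicalSpace Y] (n : ℕ) : Prop :=
  ∀ C : Set (Set Y), (∀ c ∈ C, IsOpen c) → ⋃₀ C = univ →
    ∃ W : Set (Set Y), (∀ w ∈ W, IsOpen w) ∧ ⋃₀ W = univ ∧
      (∀ w ∈ W, ∃ c ∈ C, w ⊆ c) ∧ ∀ y : Y, {w ∈ W | y ∈ w}.encard ≤ (n + 1 : ℕ)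

lemma contractibleIn_mono {X : Type*} [TopologicalSpace X] {S U : Set X}
    (h : ContractibleIn U) (hSU : S ⊆ U) : ContractibleIn S := by
  have h2 := h.comp_left (⟨Set.inclusion hSU, continuous_inclusion hSU⟩ : C(S, U))
  have : ((⟨fun x => (x : X), continuous_subtype_val⟩ : C(U, X)).comp
      (⟨Set.inclusion hSU, continuous_inclusion hSU⟩ : C(S, U)))
      = (⟨fun x => (x : X), continuous_subtype_val⟩ : C(S, X)) := ContinuousMap.ext fun _ => rfl
  rwa [this] at h2

lemma contractibleIn_homotopic_const {X : Type*} [TopologicalSpace X] [PathConnectedSpace X]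
    {S : Set X} (h : ContractibleIn S) (x₀ : X) :
    (⟨fun x => (x : X), continuous_subtype_val⟩ : C(S, X)).Homotopic
      (ContinuousMap.const S x₀) := by
  obtain ⟨x, hx⟩ := h
  refine hx.trans ?_
  obtain ⟨γ⟩ := PathConnectedSpace.joined x x₀
  exact ⟨⟨⟨fun q => γ q.1, γ.continuous.comp continuous_fst⟩, by simp, by simp⟩⟩

lemma contractibleIn_iUnion {X ι : Type*} [TopologicalSpace X] [PathConnectedSpace X]
    (P : ι → Set X) (hopen : ∀ i, IsOpen (P i))
    (hdisj : ∀ i j, i ≠ j → ∀ x, x ∈ P i → x ∈ P j → False)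
    (hcontr : ∀ i, ContractibleIn (P i)) : ContractibleIn (⋃ i, P i) := by
  classical
  obtain ⟨x₀⟩ : Nonempty X := PathConnectedSpace.nonempty
  set U : Set X := ⋃ i, P i with hU
  let H : ∀ i, ContinuousMap.Homotopy
      (⟨fun x => (x : X), continuous_subtype_val⟩ : C(P i, X))
      (ContinuousMap.const (P i) x₀) :=
    fun i => (contractibleIn_homotopic_const (hcontr i) x₀).some
  have hxm : ∀ x : U, ∃ i, (x : X) ∈ P i := fun x => Set.mem_iUnion.1 x.2
  let idx : U → ι := fun x => (hxm x).choose
  have hidx : ∀ x : U, (x : X) ∈ P (idx x) := fun x => (hxm x).choose_spec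
  let F : unitInterval × U → X := fun q => H (idx q.2) (q.1, ⟨(q.2 : X), hidx q.2⟩)
  have Fspec : ∀ (t : unitInterval) (x : U) (j) (hj : (x : X) ∈ P j),
      F (t, x) = H j (t, ⟨(x : X), hj⟩) := by
    intro t x j hj
    have hij : idx x = j := by
      by_contra hne
      exact hdisj _ _ hne _ (hidx x) hj
    subst hij
    rfl
  have hFcont : Continuous F := by
    rw [continuous_iff_continuousAt]
    rintro ⟨t, x⟩
    set i := idx x with hi
    set Ω : Set (unitInterval × U) := univ ×ˢ (Subtype.val ⁻¹' P i) with hΩdef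
    have hΩ : IsOpen Ω := isOpen_univ.prod ((hopen i).preimage continuous_subtype_val)
    have hmem : (t, x) ∈ Ω := ⟨mem_univ _, hidx x⟩
    apply ContinuousOn.continuousAt ?_ (hΩ.mem_nhds hmem)
    rw [continuousOn_iff_continuous_restrict]
    have heq : Ω.restrict F = fun q : Ω => H i (q.1.1, ⟨((q.1.2 : U) : X), q.2.2⟩) := by
      funext q
      exact Fspec q.1.1 q.1.2 i q.2.2
    rw [show Ω.domRestrict F = Ω.restrict F from rfl, heq]
    refine (H i).continuous.comp (Continuous.prodMk ?_ ?_)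
    · exact continuous_fst.comp continuous_subtype_val
    · exact (continuous_subtype_val.comp (continuous_snd.comp continuous_subtype_val)).subtype_mk _
  refine ⟨x₀, ⟨⟨⟨F, hFcont⟩, ?_, ?_⟩⟩⟩
  · intro x
    exact (H (idx x)).apply_zero ⟨(x : X), hidx x⟩
  · intro x
    exact (H (idx x)).apply_one ⟨(x : X), hidx x⟩

/-- Corollary 3.3: if `p : X → Y` is a closed continuous map, `dim Y ≤ n`, and every
fiber of `p` has an `X`-contractible open neighborhood, then `cat X ≤ n`
(and in particular `cat* p = 0`). -/
theorem catLE_of_isClosedMap_fiber_contractible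
    {X Y : Type*} [TopologicalSpace X] [TopologicalSpace Y]
    [PathConnectedSpace X] [NormalSpace X] [TopologicalSpace.MetrizableSpace Y]
    (p : X → Y) (hp : Continuous p) (hclosed : IsClosedMap p) (n : ℕ)
    (hdim : CovDimLE Y n)
    (hfib : ∀ y : Y, ∃ U : Set X, IsOpen U ∧ p ⁻¹' {y} ⊆ U ∧ ContractibleIn U) :
    CatLE X n ∧ CatStarLE p 0 := by
  classical
  -- Step 0: shrink each fiber neighborhood to a tube
  have key : ∀ y : Y, ∃ V : Set Y, IsOpen V ∧ y ∈ V ∧ ContractibleIn (p ⁻¹' V) := by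
    intro y
    obtain ⟨U, hUo, hUsub, hUc⟩ := hfib y
    refine ⟨(p '' Uᶜ)ᶜ, (hclosed _ hUo.isClosed_compl).isOpen_compl, ?_, ?_⟩
    · rintro ⟨x, hx, hpx⟩
      exact hx (hUsub hpx)
    · refine contractibleIn_mono hUc ?_
      intro x hx
      by_contra hxU
      exact hx ⟨x, hxU, rfl⟩
  choose V hVo hVmem hVc using key
  have hstar : CatStarLE p 0 := by
    refine ⟨fun _ => univ, fun _ => isOpen_univ, iUnion_const _, ?_⟩
    intro y
    refine ⟨V y, (hVo y).mem_nhds (hVmem y), fun _ => ?_⟩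
    exact contractibleIn_mono (hVc y) inter_subset_right
  refine ⟨?_, hstar⟩
  -- apply the dimension hypothesis
  obtain ⟨W, hWo, hWcov, hWref, hWmult⟩ :=
    hdim {V' : Set Y | IsOpen V' ∧ ContractibleIn (p ⁻¹' V')} (fun c hc => hc.1)
      (by
        apply eq_univ_of_forall
        intro y
        exact ⟨V y, ⟨hVo y, hVc y⟩, hVmem y⟩)
  have hWc : ∀ w ∈ W, ContractibleIn (p ⁻¹' w) := by
    intro w hw
    obtain ⟨c, hc, hwc⟩ := hWref w hw
    exact contractibleIn_mono hc.2 (preimage_mono hwc)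
  -- partition of unity
  letI : MetricSpace Y := TopologicalSpace.metrizableSpaceMetric Y
  obtain ⟨ρ, hρ⟩ := PartitionOfUnity.exists_isSubordinate (ι := ↥W) (X := Y) isClosed_univ
    (fun w => (w : Set Y)) (fun w => hWo w w.2)
    (by rw [← sUnion_eq_iUnion, hWcov])
  -- the sets V_S
  set Vs : Finset ↥W → Set Y := fun S =>
    {y | ∀ w ∈ S, 0 < ρ w y ∧ ∀ w' ∉ S, ρ w' y < ρ w y} with hVsdef
  have hVsOpen : ∀ S : Finset ↥W, IsOpen (Vs S) := by
    intro S
    rw [isOpen_iff_mem_nhds]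
    intro y₀ hy₀
    obtain ⟨N, hN, hNfin⟩ := ρ.locallyFinite y₀
    set Fa : Finset ↥W := hNfin.toFinset with hFa
    set O : Set Y := interior N ∩
        ⋂ w ∈ S, ({y | 0 < ρ w y} ∩ ⋂ w' ∈ Fa \ S, {y | ρ w' y < ρ w y}) with hO
    have hOopen : IsOpen O := by
      refine isOpen_interior.inter (isOpen_biInter_finset fun w _ => ?_)
      refine (isOpen_lt continuous_const (ρ w).continuous).inter
        (isOpen_biInter_finset fun w' _ => ?_)
      exact isOpen_lt (ρ w').continuous (ρ w).continuous
    have hy₀O : y₀ ∈ O := by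
      refine ⟨mem_interior_iff_mem_nhds.2 hN, ?_⟩
      simp only [mem_iInter, mem_inter_iff, mem_setOf_eq]
      intro w hw
      refine ⟨(hy₀ w hw).1, ?_⟩
      intro w' hw'
      exact (hy₀ w hw).2 w' (Finset.mem_sdiff.1 hw').2
    have hsub : O ⊆ Vs S := by
      intro y hy
      obtain ⟨hyN, hy2⟩ := hy
      simp only [mem_iInter, mem_inter_iff, mem_setOf_eq] at hy2
      intro w hw
      refine ⟨(hy2 w hw).1, ?_⟩
      intro w' hw'
      by_cases hwF : w' ∈ Fa
      · exact (hy2 w hw).2 w' (Finset.mem_sdiff.2 ⟨hwF, hw'⟩)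
      · have hzero : ρ w' y = 0 := by
          by_contra h
          refine hwF ?_
          rw [hFa, Finite.mem_toFinset]
          exact ⟨y, Function.mem_support.2 h, interior_subset hyN⟩
        rw [hzero]
        exact (hy2 w hw).1
    exact Filter.mem_of_superset (hOopen.mem_nhds hy₀O) hsub
  have hVsdisj : ∀ S T : Finset ↥W, S.card = T.card → S ≠ T →
      ∀ y, y ∈ Vs S → y ∈ Vs T → False := by
    intro S T hcard hST y hyS hyT
    obtain ⟨w, hwS, hwT⟩ : ∃ w, w ∈ S ∧ w ∉ T := by
      by_contra h
      push_neg at h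
      exact hST (Finset.eq_of_subset_of_card_le h hcard.ge)
    obtain ⟨u, huT, huS⟩ : ∃ u, u ∈ T ∧ u ∉ S := by
      by_contra h
      push_neg at h
      exact hST (Finset.eq_of_subset_of_card_le h hcard.le).symm
    have h1 := (hyS w hwS).2 u huS
    have h2 := (hyT u huT).2 w hwT
    exact absurd (h1.trans h2) (lt_irrefl _)
  have hVssub : ∀ (S : Finset ↥W) (w : ↥W), w ∈ S → Vs S ⊆ (w : Set Y) := by
    intro S w hw y hy
    exact hρ w (subset_closure (Function.mem_support.2 (hy w hw).1.ne'))
  have hmemVs : ∀ y : Y, y ∈ Vs (ρ.finsupport y) := by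
    intro y w hw
    rw [ρ.mem_finsupport] at hw
    have hpos : 0 < ρ w y := (ρ.nonneg w y).lt_of_ne (Ne.symm hw)
    refine ⟨hpos, ?_⟩
    intro w' hw'
    have hzero : ρ w' y = 0 := by
      by_contra h
      exact hw' ((ρ.mem_finsupport y).2 h)
    rw [hzero]
    exact hpos
  have hcard : ∀ y : Y, 1 ≤ (ρ.finsupport y).card ∧ (ρ.finsupport y).card ≤ n + 1 := by
    intro y
    constructor
    · rw [Nat.one_le_iff_ne_zero, Ne, Finset.card_eq_zero]
      intro h
      have h1 := ρ.sum_finsupport (mem_univ y)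
      rw [h] at h1
      simp at h1
    · have h1 : (Subtype.val '' ((ρ.finsupport y : Set ↥W))) ⊆ {w ∈ W | y ∈ w} := by
        rintro _ ⟨w, hw, rfl⟩
        rw [Finset.mem_coe, ρ.mem_finsupport] at hw
        exact ⟨w.2, hρ w (subset_closure hw)⟩
      have h2 := (encard_mono h1).trans (hWmult y)
      rw [(Subtype.val_injective.injOn).encard_image,
        encard_coe_eq_coe_finsetCard] at h2
      exact_mod_cast h2
  -- the cover of X
  set A : Fin (n + 1) → Set X := fun i =>
    ⋃ S : {S : Finset ↥W // S.card = (i : ℕ) + 1}, p ⁻¹' Vs (S : Finset ↥W) with hA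
  refine ⟨A, ?_, ?_, ?_⟩
  · intro i
    exact isOpen_iUnion fun S => (hVsOpen _).preimage hp
  · intro i
    refine contractibleIn_iUnion _ (fun S => (hVsOpen _).preimage hp) ?_ ?_
    · intro S T hST x hxS hxT
      refine hVsdisj S.1 T.1 (S.2.trans T.2.symm) (fun h => hST (Subtype.ext h)) (p x) hxS hxT
    · intro S
      obtain ⟨w, hw⟩ := Finset.card_pos.1 (by rw [S.2]; omega)
      exact contractibleIn_mono (hWc w w.2) (preimage_mono (hVssub S.1 w hw))
  · apply eq_univ_of_forall
    intro x
    set y := p x with hy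
    obtain ⟨hc1, hc2⟩ := hcard y
    have hScard : (ρ.finsupport y).card = ((⟨(ρ.finsupport y).card - 1, by omega⟩ :
        Fin (n + 1)) : ℕ) + 1 := by
      simp only [Fin.val_mk]
      omega
    refine mem_iUnion.2 ⟨⟨(ρ.finsupport y).card - 1, by omega⟩, ?_⟩
    exact mem_iUnion.2 ⟨⟨ρ.finsupport y, hScard⟩, hmemVs y⟩
end

section
/- Let X and Y be nonempty topological spaces with X path-connected and Y locally contractible, and let π : X × Y → Y be the projection onto the second factor. Then cat* π = cat X. -/
open Set Topology

/-- The Lusternik–Schnirelmann category of `X`, as an element of `ℕ∞`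
(`⊤` if no finite contractible cover exists). -/
noncomputable def LSCat (X : Type*) [TopologicalSpace X] : ℕ∞ :=
  sInf ((↑) '' {n : ℕ | CatLE X n})

/-- The ∗-category of a map `f`, as an element of `ℕ∞`. -/
noncomputable def CatStar {X Y : Type*} [TopologicalSpace X] [TopologicalSpace Y]
    (f : X → Y) : ℕ∞ :=
  sInf ((↑) '' {n : ℕ | CatStarLE f n})

/-- `Y` is locally contractible: every neighborhood `V` of a point contains a
neighborhood `U` whose inclusion into `V` is nullhomotopic. -/
def LocallyContractibleSpace' (Y : Type*) [TopologicalSpace Y] : Prop :=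
  ∀ y : Y, ∀ V ∈ 𝓝 y, ∃ U ∈ 𝓝 y, ∃ hUV : U ⊆ V,
    ContinuousMap.Nullhomotopic
      (⟨Set.inclusion hUV, continuous_inclusion hUV⟩ : C(U, V))

section Aux

open ContinuousMap

/-- Pairing of nullhomotopic maps is nullhomotopic. -/
theorem nullhomotopic_prodMk {A X Y : Type*} [TopologicalSpace A] [TopologicalSpace X]
    [TopologicalSpace Y] {f : C(A, X)} {g : C(A, Y)}
    (hf : f.Nullhomotopic) (hg : g.Nullhomotopic) :
    Nullhomotopic (⟨fun a => (f a, g a), (map_continuous f).prodMk (map_continuous g)⟩ :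
      C(A, X × Y)) := by
  obtain ⟨x, ⟨H⟩⟩ := hf
  obtain ⟨y, ⟨K⟩⟩ := hg
  refine ⟨(x, y), ⟨?_⟩⟩
  exact
    { toFun := fun p => (H p, K p)
      continuous_toFun := (H.continuous).prodMk (K.continuous)
      map_zero_left := by intro a; simp
      map_one_left := by intro a; simp }

/-- If the underlying functions agree, nullhomotopy transfers. -/
theorem nullhomotopic_congr {A X : Type*} [TopologicalSpace A] [TopologicalSpace X]
    {f g : C(A, X)} (h : ∀ a, f a = g a) (hf : f.Nullhomotopic) : g.Nullhomotopic := by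
  have : f = g := ContinuousMap.ext h
  rwa [← this]

theorem catStarLE_iff_catLE
    (X Y : Type*) [TopologicalSpace X] [TopologicalSpace Y]
    [Nonempty X] [Nonempty Y]
    (hY : LocallyContractibleSpace' Y) (n : ℕ) :
    CatStarLE (Prod.snd : X × Y → Y) n ↔ CatLE X n := by
  constructor
  · rintro ⟨U, hUopen, hUcov, hUnif⟩
    obtain ⟨y₀⟩ := ‹Nonempty Y›
    obtain ⟨V, hV, hVc⟩ := hUnif y₀
    have hy₀V : y₀ ∈ V := mem_of_mem_nhds hV
    refine ⟨fun i => {x : X | (x, y₀) ∈ U i}, ?_, ?_, ?_⟩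
    · intro i
      exact (hUopen i).preimage (Continuous.prodMk_left y₀)
    · intro i
      set S : Set (X × Y) := U i ∩ (Prod.snd : X × Y → Y) ⁻¹' V with hS
      have hSc : ContractibleIn S := hVc i
      let j : C({x : X | (x, y₀) ∈ U i}, S) :=
        ⟨fun x => ⟨(x.1, y₀), ⟨x.2, hy₀V⟩⟩,
          Continuous.subtype_mk ((Continuous.prodMk_left y₀).comp continuous_subtype_val) _⟩
      have h1 : Nullhomotopic
          ((⟨fun p => (p : X × Y), continuous_subtype_val⟩ : C(S, X × Y)).comp j) :=
        hSc.comp_left j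
      have h2 := h1.comp_right ⟨Prod.fst, continuous_fst⟩
      exact nullhomotopic_congr (fun a => rfl) h2
    · ext x
      simp only [Set.mem_iUnion, Set.mem_setOf_eq, Set.mem_univ, iff_true]
      have : (x, y₀) ∈ ⋃ i, U i := by rw [hUcov]; trivial
      exact Set.mem_iUnion.mp this
  · rintro ⟨U, hUopen, hUc, hUcov⟩
    refine ⟨fun i => (Prod.fst : X × Y → X) ⁻¹' U i, ?_, ?_, ?_⟩
    · intro i; exact (hUopen i).preimage continuous_fst
    · ext p
      simp only [Set.mem_iUnion, Set.mem_preimage, Set.mem_univ, iff_true]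
      have : p.1 ∈ ⋃ i, U i := by rw [hUcov]; trivial
      exact Set.mem_iUnion.mp this
    · intro y
      obtain ⟨W, hW, hWuniv, hWc⟩ := hY y Set.univ Filter.univ_mem
      refine ⟨W, hW, fun i => ?_⟩
      set S : Set (X × Y) := (Prod.fst : X × Y → X) ⁻¹' U i ∩ (Prod.snd : X × Y → Y) ⁻¹' W
        with hSdef
      -- first coordinate
      let j₁ : C(S, U i) := ⟨fun p => ⟨p.1.1, p.2.1⟩,
        Continuous.subtype_mk (continuous_fst.comp continuous_subtype_val) _⟩
      have h1 : Nullhomotopic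
          ((⟨fun x => (x : X), continuous_subtype_val⟩ : C(U i, X)).comp j₁) :=
        (hUc i).comp_left j₁
      -- second coordinate
      let j₂ : C(S, W) := ⟨fun p => ⟨p.1.2, p.2.2⟩,
        Continuous.subtype_mk (continuous_snd.comp continuous_subtype_val) _⟩
      have hWnull : Nullhomotopic
          ((⟨fun v => (v : Y), continuous_subtype_val⟩ :
              C((Set.univ : Set Y), Y)).comp
            (⟨Set.inclusion hWuniv, continuous_inclusion hWuniv⟩ : C(W, (Set.univ : Set Y)))) :=
        hWc.comp_right _
      have h2 : Nullhomotopic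
          (((⟨fun v => (v : Y), continuous_subtype_val⟩ :
              C((Set.univ : Set Y), Y)).comp
            (⟨Set.inclusion hWuniv, continuous_inclusion hWuniv⟩ :
              C(W, (Set.univ : Set Y)))).comp j₂) :=
        hWnull.comp_left j₂
      have := nullhomotopic_prodMk h1 h2
      exact nullhomotopic_congr (fun a => rfl) this

end Aux

/-- For the projection `π : X × Y → Y` with `X` path-connected and `Y` locally
contractible (both nonempty), `cat* π = cat X`. -/
theorem catStar_proj_eq_lsCat
    (X Y : Type*) [TopologicalSpace X] [TopologicalSpace Y]
    [Nonempty X] [Nonempty Y] [PathConnectedSpace X]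
    (hY : LocallyContractibleSpace' Y) :
    CatStar (Prod.snd : X × Y → Y) = LSCat X := by
  unfold CatStar LSCat
  congr 1
  ext m
  simp only [Set.mem_image, Set.mem_setOf_eq]
  constructor
  · rintro ⟨n, hn, rfl⟩
    exact ⟨n, (catStarLE_iff_catLE X Y hY n).mp hn, rfl⟩
  · rintro ⟨n, hn, rfl⟩
    exact ⟨n, (catStarLE_iff_catLE X Y hY n).mpr hn, rfl⟩
end
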